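/- arXiv:2506.01473 — 5 statements merged into one kernel-verified Lean document; each statement's English description precedes it below -/
import Mathlib

section
/- Let θ>0 and β>0, and let X be a random variable with probability density f(x;θ,β)=(1/θ)(1+βx/θ)^{−1/β−1} on (0,∞). Then for every t>0, E[((β+1)/(θ+βX))·min(X,t)] = 1−(1+βt/θ)^{−1/β}, i.e. the expectation equals the GPD cumulative distribution function F(t;θ,β). -/
open MeasureTheory Set Filter Topology

/-- **Stein-type identity for the GPD with positive shape parameter.**
For `θ > 0`, `β > 0` and the GPD density `f(x;θ,β) = (1/θ)(1+βx/θ)^(-1/β-1)` on `(0,∞)`,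
the expectation `E[((β+1)/(θ+βX))·min(X,t)]` equals the GPD CDF `1-(1+βt/θ)^(-1/β)`
for every `t > 0`. -/
theorem gpd_stein_identity_pos_shape (θ β : ℝ) (hθ : 0 < θ) (hβ : 0 < β)
    (t : ℝ) (ht : 0 < t) :
    ∫ x in Ioi (0 : ℝ),
        ((β + 1) / (θ + β * x)) * min x t * ((1 / θ) * (1 + β * x / θ) ^ (-1 / β - 1)) =
      1 - (1 + β * t / θ) ^ (-1 / β) := by
  have hθ0 : θ ≠ 0 := hθ.ne'
  have hβ0 : β ≠ 0 := hβ.ne'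
  have hs : ∀ x : ℝ, 0 ≤ x → 0 < 1 + β * x / θ := fun x hx => by positivity
  have hden : ∀ x : ℝ, 0 ≤ x → 0 < θ + β * x := fun x hx => by positivity
  -- derivative of the base
  have hsd : ∀ x : ℝ, HasDerivAt (fun y => 1 + β * y / θ) (β / θ) x := by
    intro x
    simpa using (((hasDerivAt_id x).const_mul β).div_const θ).const_add 1
  have hpow : ∀ (p : ℝ) (x : ℝ), 0 ≤ x →
      HasDerivAt (fun y => (1 + β * y / θ) ^ p)
        (β / θ * p * (1 + β * x / θ) ^ (p - 1)) x := by
    intro p x hx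
    exact (hsd x).rpow_const (Or.inl (hs x hx).ne')
  -- abbreviations
  set f : ℝ → ℝ := fun x =>
    ((β + 1) / (θ + β * x)) * min x t * ((1 / θ) * (1 + β * x / θ) ^ (-1 / β - 1)) with hf
  -- split the domain
  rw [← Ioc_union_Ioi_eq_Ioi ht.le]
  -- the first piece via FTC
  have hG : ∀ x ∈ Icc (0 : ℝ) t, HasDerivAt
      (fun y => -((β + 1) / β) * (1 + β * y / θ) ^ (-1 / β)
        + (1 / β) * (1 + β * y / θ) ^ (-1 / β - 1))
      (((β + 1) / (θ + β * x)) * x * ((1 / θ) * (1 + β * x / θ) ^ (-1 / β - 1))) x := by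
    intro x hx
    have h1 := ((hpow (-1 / β) x hx.1).const_mul (-((β + 1) / β)))
    have h2 := ((hpow (-1 / β - 1) x hx.1).const_mul (1 / β))
    have h := h1.add h2
    refine h.congr_deriv ?_
    have e2 : (-1 / β - 1 - 1 : ℝ) = -1 / β - 2 := by ring
    have e1 : (1 + β * x / θ) ^ (-1 / β - 1)
        = (1 + β * x / θ) ^ (-1 / β - 2) * (1 + β * x / θ) := by
      rw [← Real.rpow_add_one (hs x hx.1).ne' (-1 / β - 2)]; congr 1; ring
    have hne : θ + β * x ≠ 0 := (hden x hx.1).ne'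
    rw [e2, e1]
    generalize (1 + β * x / θ) ^ (-1 / β - 2) = A
    field_simp
    ring
  have hIoc : ∫ x in Ioc (0 : ℝ) t, f x =
      (-((β + 1) / β) * (1 + β * t / θ) ^ (-1 / β)
        + (1 / β) * (1 + β * t / θ) ^ (-1 / β - 1)) - (-((β + 1) / β) + 1 / β) := by
    have hcong : ∀ x ∈ Ioc (0:ℝ) t, f x =
        ((β + 1) / (θ + β * x)) * x * ((1 / θ) * (1 + β * x / θ) ^ (-1 / β - 1)) := by
      intro x hx
      simp [hf, min_eq_left hx.2]
    rw [setIntegral_congr_fun measurableSet_Ioc hcong,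
      ← intervalIntegral.integral_of_le ht.le]
    have hint : IntervalIntegrable
        (fun x => ((β + 1) / (θ + β * x)) * x * ((1 / θ) * (1 + β * x / θ) ^ (-1 / β - 1)))
        volume 0 t := by
      apply ContinuousOn.intervalIntegrable
      rw [uIcc_of_le ht.le]
      apply ContinuousOn.mul
      · exact (continuousOn_const.div (by fun_prop)
          (fun x hx => (hden x hx.1).ne')).mul continuousOn_id
      · exact continuousOn_const.mul ((by fun_prop : ContinuousOn (fun x : ℝ => 1 + β * x / θ)
          (Icc 0 t)).rpow_const (fun x hx => Or.inl (hs x hx.1).ne'))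
    have := intervalIntegral.integral_eq_sub_of_hasDerivAt
      (fun x hx => hG x (by rwa [uIcc_of_le ht.le] at hx)) hint
    rw [this]
    norm_num [Real.one_rpow]
  -- the second piece via improper FTC
  have hg' : ∀ x ∈ Ici t, HasDerivAt
      (fun y => -(t / θ) * (1 + β * y / θ) ^ (-1 / β - 1))
      ((t / θ) * (β / θ) * (1 / β + 1) * (1 + β * x / θ) ^ (-1 / β - 2)) x := by
    intro x hx
    have hx0 : (0:ℝ) ≤ x := ht.le.trans hx
    have h := (hpow (-1 / β - 1) x hx0).const_mul (-(t / θ))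
    refine h.congr_deriv ?_
    have e2 : (-1 / β - 1 - 1 : ℝ) = -1 / β - 2 := by ring
    rw [e2]; ring
  have hgtend : Tendsto (fun y => -(t / θ) * (1 + β * y / θ) ^ (-1 / β - 1)) atTop (𝓝 0) := by
    have hb : Tendsto (fun y : ℝ => 1 + β * y / θ) atTop atTop := by
      apply tendsto_atTop_add_const_left
      exact (tendsto_id.const_mul_atTop (by positivity : (0:ℝ) < β / θ)).congr
        (fun x => by simp only [id]; ring)
    have hp : Tendsto (fun s : ℝ => s ^ (-1 / β - 1)) atTop (𝓝 0) := by
      have h1 : (0:ℝ) < 1 / β + 1 := by positivity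
      have e : (fun s : ℝ => s ^ (-1 / β - 1)) = fun s : ℝ => s ^ (-(1 / β + 1)) := by
        funext s; congr 1; ring
      rw [e]; exact tendsto_rpow_neg_atTop h1
    have : Tendsto (fun y : ℝ => (1 + β * y / θ) ^ (-1 / β - 1)) atTop (𝓝 0) :=
      hp.comp hb
    simpa using this.const_mul (-(t / θ))
  have hIoiInt : IntegrableOn
      (fun x => (t / θ) * (β / θ) * (1 / β + 1) * (1 + β * x / θ) ^ (-1 / β - 2)) (Ioi t) :=
    integrableOn_Ioi_deriv_of_nonneg' hg'
      (fun x hx => by have hx0 : (0:ℝ) ≤ x := (ht.trans hx).le; positivity) hgtend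
  have hIoiVal : ∫ x in Ioi t,
      (t / θ) * (β / θ) * (1 / β + 1) * (1 + β * x / θ) ^ (-1 / β - 2)
      = 0 - (-(t / θ) * (1 + β * t / θ) ^ (-1 / β - 1)) :=
    integral_Ioi_of_hasDerivAt_of_nonneg' hg'
      (fun x hx => by have hx0 : (0:ℝ) ≤ x := (ht.trans hx).le; positivity) hgtend
  -- f agrees with this derivative on Ioi t
  have hcong2 : ∀ x ∈ Ioi t, f x =
      (t / θ) * (β / θ) * (1 / β + 1) * (1 + β * x / θ) ^ (-1 / β - 2) := by
    intro x hx
    have hx0 : (0:ℝ) ≤ x := (ht.trans hx).le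
    have e1 : (1 + β * x / θ) ^ (-1 / β - 1)
        = (1 + β * x / θ) ^ (-1 / β - 2) * (1 + β * x / θ) := by
      rw [← Real.rpow_add_one (hs x hx0).ne' (-1 / β - 2)]; congr 1; ring
    have hds : θ + β * x = θ * (1 + β * x / θ) := by field_simp
    have h1 : (0:ℝ) < 1 + β * x / θ := hs x hx0
    simp only [hf, min_eq_right (le_of_lt (mem_Ioi.mp hx)), e1, hds]
    field_simp
    ring
  have hIoi : ∫ x in Ioi t, f x = (t / θ) * (1 + β * t / θ) ^ (-1 / β - 1) := by
    rw [setIntegral_congr_fun measurableSet_Ioi hcong2, hIoiVal]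
    ring
  -- integrability of f on the two pieces
  have hfIoc : IntegrableOn f (Ioc 0 t) := by
    apply (ContinuousOn.integrableOn_Icc ?_).mono_set Ioc_subset_Icc_self
    apply ContinuousOn.mul
    · exact ((continuousOn_const.div (by fun_prop)
        (fun x hx => (hden x hx.1).ne')).mul (by fun_prop))
    · exact continuousOn_const.mul ((by fun_prop : ContinuousOn (fun x : ℝ => 1 + β * x / θ)
        (Icc 0 t)).rpow_const (fun x hx => Or.inl (hs x hx.1).ne'))
  have hfIoi : IntegrableOn f (Ioi t) :=
    hIoiInt.congr_fun (fun x hx => (hcong2 x hx).symm) measurableSet_Ioi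
  rw [setIntegral_union (Ioc_disjoint_Ioi le_rfl) measurableSet_Ioi hfIoc hfIoi,
    hIoc, hIoi]
  -- final algebra
  have hst : (0:ℝ) < 1 + β * t / θ := hs t ht.le
  have e1 : (1 + β * t / θ) ^ (-1 / β)
      = (1 + β * t / θ) ^ (-1 / β - 1) * (1 + β * t / θ) := by
    rw [← Real.rpow_add_one hst.ne' (-1 / β - 1)]; congr 1; ring
  rw [e1]
  field_simp
  ring
end

section
/- Let θ>0 and −1<β<0, and let X be a random variable with probability density f(x;θ,β)=(1/θ)(1+βx/θ)^{−1/β−1} on (0,−θ/β). Then for every t with 0<t<−θ/β, E[((β+1)/(θ+βX))·min(X,t)] = 1−(1+βt/θ)^{−1/β}, i.e. the expectation equals the GPD cumulative distribution function F(t;θ,β). -/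
open MeasureTheory Set

/-- **Stein-type identity for the GPD with negative shape parameter.**
For `θ > 0`, `-1 < β < 0` and the GPD density `f(x;θ,β) = (1/θ)(1+βx/θ)^(-1/β-1)` on
`(0, -θ/β)`, the expectation `E[((β+1)/(θ+βX))·min(X,t)]` equals the GPD CDF
`1-(1+βt/θ)^(-1/β)` for every `0 < t < -θ/β`. -/
theorem gpd_stein_identity_neg_shape (θ β : ℝ) (hθ : 0 < θ) (hβl : -1 < β) (hβu : β < 0)
    (t : ℝ) (ht : 0 < t) (ht' : t < -θ / β) :
    ∫ x in Ioo (0 : ℝ) (-θ / β),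
        ((β + 1) / (θ + β * x)) * min x t * ((1 / θ) * (1 + β * x / θ) ^ (-1 / β - 1)) =
      1 - (1 + β * t / θ) ^ (-1 / β) := by
  have hβ0 : β ≠ 0 := hβu.ne
  have hθ0 : θ ≠ 0 := hθ.ne'
  have hm : (0:ℝ) < -θ / β := ht.trans ht'
  have hp : 1 < -1 / β := by
    rw [lt_div_iff_of_neg hβu]; linarith
  have hbase : ∀ x : ℝ, x < -θ / β → 0 < 1 + β * x / θ := by
    intro x hx
    rw [lt_div_iff_of_neg hβu] at hx
    have h3 : 0 < θ + β * x := by nlinarith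
    have h4 : 1 + β * x / θ = (θ + β * x) / θ := by field_simp
    rw [h4]; exact div_pos h3 hθ
  have hbt : 0 < 1 + β * t / θ := hbase t ht'
  set K : ℝ → ℝ := fun x => (β + 1) / θ ^ 2 * (1 + β * x / θ) ^ (-1 / β - 2) with hK
  have key1 : ∀ u v w : ℝ, u ≠ 0 →
      (β + 1) / (θ * u) * w * (1 / θ * (v * u)) = w * ((β + 1) / θ ^ 2 * v) := by
    intro u v w hu
    field_simp
  have key2 : ∀ x A B : ℝ, x * ((β + 1) / θ ^ 2 * B)
      = -(β / θ * (-1 / β) * A) - (1 / θ * A + x / θ * (β / θ * (-1 / β - 1) * B)) := by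
    intro x A B
    field_simp
    ring
  have key3 : ∀ x B : ℝ, t * ((β + 1) / θ ^ 2 * B)
      = -(t / θ) * (β / θ * (-1 / β - 1) * B) := by
    intro x B
    field_simp
    ring
  -- pointwise identity for the integrand
  have hpt : ∀ x : ℝ, x < -θ / β →
      ((β + 1) / (θ + β * x)) * min x t * ((1 / θ) * (1 + β * x / θ) ^ (-1 / β - 1))
        = min x t * K x := by
    intro x hxm
    have hu := hbase x hxm
    have hθx : θ + β * x = θ * (1 + β * x / θ) := by field_simp
    have he : (-1 / β - 1 : ℝ) = (-1 / β - 2) + 1 := by ring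
    rw [hθx, he, Real.rpow_add_one hu.ne']
    exact key1 (1 + β * x / θ) ((1 + β * x / θ) ^ (-1 / β - 2)) (min x t) hu.ne'
  -- interval integrability of the kernel power up to the right endpoint
  have hIK : IntervalIntegrable (fun x : ℝ => (1 + β * x / θ) ^ (-1 / β - 2))
      volume t (-θ / β) := by
    have h1 : IntervalIntegrable (fun y : ℝ => y ^ (-1 / β - 2)) volume (1 + β * t / θ) 0 :=
      intervalIntegral.intervalIntegrable_rpow' (by linarith)
    have h2 := h1.comp_add_right 1
    have h3 := h2.comp_mul_left (c := β / θ)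
    have e1 : (1 + β * t / θ - 1) / (β / θ) = t := by field_simp; ring
    have e2 : ((0:ℝ) - 1) / (β / θ) = -θ / β := by
      field_simp
      ring
    rw [e1, e2] at h3
    have hfe : (fun x : ℝ => (1 + β * x / θ) ^ (-1 / β - 2))
        = fun x : ℝ => (β / θ * x + 1) ^ (-1 / β - 2) := by
      funext x; congr 1; ring
    rw [hfe]
    exact h3
  have hIK2 : IntervalIntegrable (fun x : ℝ => t * K x) volume t (-θ / β) :=
    (hIK.const_mul ((β + 1) / θ ^ 2)).const_mul t
  have hcont1 : ContinuousOn (fun x : ℝ => x * K x) (Icc 0 t) := by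
    apply ContinuousOn.mul (continuousOn_id)
    apply ContinuousOn.mul continuousOn_const
    intro x hx
    have hxm : x < -θ / β := lt_of_le_of_lt hx.2 ht'
    apply ContinuousAt.continuousWithinAt
    exact ContinuousAt.rpow_const (by fun_prop) (Or.inl (hbase x hxm).ne')
  -- integrability of the two pieces
  have hint1 : IntervalIntegrable (fun x : ℝ => x * K x) volume 0 t := by
    apply ContinuousOn.intervalIntegrable
    rwa [uIcc_of_le ht.le]
  have hi1 : IntegrableOn (fun x : ℝ => x * K x) (Ioc 0 t) volume :=
    (intervalIntegrable_iff_integrableOn_Ioc_of_le ht.le).1 hint1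
  have hi2 : IntegrableOn (fun x : ℝ => t * K x) (Ioo t (-θ / β)) volume :=
    ((intervalIntegrable_iff_integrableOn_Ioc_of_le ht'.le).1 hIK2).mono_set Ioo_subset_Ioc_self
  -- EqOn facts
  have heq1 : EqOn (fun x : ℝ => x * K x)
      (fun x => ((β + 1) / (θ + β * x)) * min x t * ((1 / θ) * (1 + β * x / θ) ^ (-1 / β - 1)))
      (Ioc 0 t) := by
    intro x hx
    have hxm : x < -θ / β := lt_of_le_of_lt hx.2 ht'
    simp only
    rw [hpt x hxm, min_eq_left hx.2]
  have heq2 : EqOn (fun x : ℝ => t * K x)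
      (fun x => ((β + 1) / (θ + β * x)) * min x t * ((1 / θ) * (1 + β * x / θ) ^ (-1 / β - 1)))
      (Ioo t (-θ / β)) := by
    intro x hx
    simp only
    rw [hpt x hx.2, min_eq_right hx.1.le]
  have hif1 := hi1.congr_fun heq1 measurableSet_Ioc
  have hif2 := hi2.congr_fun heq2 measurableSet_Ioo
  -- split the integral
  have hunion : Ioo (0:ℝ) (-θ / β) = Ioc 0 t ∪ Ioo t (-θ / β) :=
    (Ioc_union_Ioo_eq_Ioo ht.le ht').symm
  have hdisj : Disjoint (Ioc (0:ℝ) t) (Ioo t (-θ / β)) := by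
    rw [Set.disjoint_left]
    rintro x ⟨_, h2⟩ ⟨h3, _⟩
    exact absurd h3 (not_lt.2 h2)
  rw [hunion, setIntegral_union hdisj measurableSet_Ioo hif1 hif2]
  -- rewrite both pieces with the clean integrands
  rw [← setIntegral_congr_fun measurableSet_Ioc heq1,
    ← setIntegral_congr_fun measurableSet_Ioo heq2]
  -- first piece via FTC
  have hFTC1 : ∫ x in Ioc (0:ℝ) t, x * K x
      = (-(1 + β * t / θ) ^ (-1 / β) - t / θ * (1 + β * t / θ) ^ (-1 / β - 1)) - (-1) := by
    have hder : ∀ x ∈ uIcc (0:ℝ) t,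
        HasDerivAt (fun y : ℝ => -(1 + β * y / θ) ^ (-1 / β)
          - y / θ * (1 + β * y / θ) ^ (-1 / β - 1)) (x * K x) x := by
      intro x hx
      rw [uIcc_of_le ht.le] at hx
      have hxm : x < -θ / β := lt_of_le_of_lt hx.2 ht'
      have hu : 0 < 1 + β * x / θ := hbase x hxm
      have hU : HasDerivAt (fun y : ℝ => 1 + β * y / θ) (β / θ) x := by
        simpa using (((hasDerivAt_id x).const_mul β).div_const θ).const_add 1
      have h1 := hU.rpow_const (p := -1 / β) (Or.inl hu.ne')
      have h2 := hU.rpow_const (p := -1 / β - 1) (Or.inl hu.ne')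
      have hx' : HasDerivAt (fun y : ℝ => y / θ) (1 / θ) x := by
        simpa using (hasDerivAt_id x).div_const θ
      have h3 := hx'.mul h2
      have h4 := h1.neg.sub h3
      convert h4 using 1
      · rfl
      · rfl
      · rfl
      have he : (-1 / β - 1 - 1 : ℝ) = -1 / β - 2 := by ring
      rw [he]
      exact key2 x _ _
    rw [← intervalIntegral.integral_of_le ht.le,
      intervalIntegral.integral_eq_sub_of_hasDerivAt hder hint1]
    norm_num
  -- second piece via FTC with right-continuity at the singular endpoint
  have hFTC2 : ∫ x in Ioo t (-θ / β), t * K x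
      = 0 - (-(t / θ) * (1 + β * t / θ) ^ (-1 / β - 1)) := by
    have hcont : ContinuousOn
        (fun y : ℝ => -(t / θ) * (1 + β * y / θ) ^ (-1 / β - 1)) (Icc t (-θ / β)) := by
      apply ContinuousOn.mul continuousOn_const
      intro x _
      apply ContinuousAt.continuousWithinAt
      exact ContinuousAt.rpow_const (by fun_prop) (Or.inr (by linarith))
    have hder : ∀ x ∈ Ioo t (-θ / β),
        HasDerivWithinAt (fun y : ℝ => -(t / θ) * (1 + β * y / θ) ^ (-1 / β - 1))
          (t * K x) (Ioi x) x := by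
      intro x hx
      have hu : 0 < 1 + β * x / θ := hbase x hx.2
      have hU : HasDerivAt (fun y : ℝ => 1 + β * y / θ) (β / θ) x := by
        simpa using (((hasDerivAt_id x).const_mul β).div_const θ).const_add 1
      have h2 := (hU.rpow_const (p := -1 / β - 1) (Or.inl hu.ne')).const_mul (-(t / θ))
      apply HasDerivAt.hasDerivWithinAt
      convert h2 using 1
      · rfl
      have he : (-1 / β - 1 - 1 : ℝ) = -1 / β - 2 := by ring
      rw [he]
      exact key3 x _
    have := intervalIntegral.integral_eq_sub_of_hasDeriv_right_of_le ht'.le hcont hder hIK2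
    rw [intervalIntegral.integral_of_le ht'.le, integral_Ioc_eq_integral_Ioo] at this
    rw [this]
    have hzero : 1 + β * (-θ / β) / θ = 0 := by field_simp; norm_num
    rw [hzero, Real.zero_rpow (by linarith : (-1 / β - 1 : ℝ) ≠ 0)]
    ring
  rw [hFTC1, hFTC2]
  ring
end

section
/- Let θ>0 and β>0. A positive-valued random variable X has the generalized Pareto distribution GPD(θ,β) (i.e. its CDF is F(t)=1−(1+βt/θ)^{−1/β} for t>0) if and only if its cumulative distribution function satisfies F(t)=E[((β+1)/(θ+βX))·min(X,t)] for all t>0. -/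
open MeasureTheory ProbabilityTheory Set
open Filter Topology
open scoped NNReal ENNReal

lemma gpd_base_pos {θ β : ℝ} (hθ : 0 < θ) (hβ : 0 < β) {x : ℝ} (hx : 0 ≤ x) :
    0 < 1 + β * x / θ := by
  have : 0 ≤ β * x / θ := by positivity
  linarith

lemma gpd_hasDerivAt {θ β : ℝ} (hθ : 0 < θ) (p : ℝ) {x : ℝ} (hx : 0 < 1 + β * x / θ) :
    HasDerivAt (fun y : ℝ => (1 + β * y / θ) ^ p)
      (p * (β / θ) * (1 + β * x / θ) ^ (p - 1)) x := by
  have h1 : HasDerivAt (fun y : ℝ => 1 + β * y / θ) (β / θ) x := by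
    simpa using (((hasDerivAt_id x).const_mul β).div_const θ).const_add 1
  have := h1.rpow_const (p := p) (Or.inl hx.ne')
  convert this using 1
  ring

lemma gpd_continuousAt {θ β : ℝ} (hθ : 0 < θ) (p : ℝ) {x : ℝ} (hx : 0 < 1 + β * x / θ) :
    ContinuousAt (fun y : ℝ => (1 + β * y / θ) ^ p) x :=
  (gpd_hasDerivAt hθ p hx).continuousAt

-- antiderivative of the pdf-like power
lemma gpd_hasDerivAt_A0 {θ β : ℝ} (hθ : 0 < θ) (hβ : 0 < β) (c : ℝ) {x : ℝ}
    (hx : 0 < 1 + β * x / θ) :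
    HasDerivAt (fun y : ℝ => -c * θ * (1 + β * y / θ) ^ (-1 / β))
      (c * (1 + β * x / θ) ^ (-1 / β - 1)) x := by
  have := (gpd_hasDerivAt hθ (-1/β) hx).const_mul (-c * θ)
  refine this.congr_deriv ?_
  field_simp

lemma gpd_integral_A0 {θ β : ℝ} (hθ : 0 < θ) (hβ : 0 < β) (c : ℝ) {t : ℝ} (ht : 0 ≤ t) :
    ∫ x in (0:ℝ)..t, c * (1 + β * x / θ) ^ (-1 / β - 1)
      = c * θ * (1 - (1 + β * t / θ) ^ (-1 / β)) := by
  have hpos : ∀ x ∈ uIcc (0:ℝ) t, 0 < 1 + β * x / θ := by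
    intro x hx
    rw [uIcc_of_le ht] at hx
    exact gpd_base_pos hθ hβ hx.1
  rw [intervalIntegral.integral_eq_sub_of_hasDerivAt
    (fun x hx => gpd_hasDerivAt_A0 hθ hβ c (hpos x hx)) ?_]
  · have h0 : 1 + β * 0 / θ = 1 := by ring
    rw [h0, Real.one_rpow]
    ring
  · apply ContinuousOn.intervalIntegrable
    intro x hx
    exact (continuousAt_const.mul (gpd_continuousAt hθ (-1/β-1) (hpos x hx))).continuousWithinAt

lemma gpd_hasDerivAt_A1 {θ β : ℝ} (hθ : 0 < θ) (hβ : 0 < β) {x : ℝ}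
    (hx : 0 < 1 + β * x / θ) :
    HasDerivAt (fun y : ℝ => -((β + 1) * y / θ + 1) * (1 + β * y / θ) ^ (-1 / β - 1))
      ((β + 1) / (θ + β * x) * x * ((1 / θ) * (1 + β * x / θ) ^ (-1 / β - 1))) x := by
  have h1 : HasDerivAt (fun y : ℝ => -((β + 1) * y / θ + 1)) (-((β + 1) / θ)) x := by
    have : HasDerivAt (fun y : ℝ => (β + 1) * y / θ + 1) ((β + 1) / θ) x := by
      simpa using (((hasDerivAt_id x).const_mul (β + 1)).div_const θ).add_const 1
    exact this.neg
  have h2 := gpd_hasDerivAt hθ (-1/β-1) hx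
  have := h1.mul h2
  refine this.congr_deriv ?_
  have hb : (1 + β * x / θ) ^ (-1 / β - 1 - 1)
      = (1 + β * x / θ) ^ (-1 / β - 1) / (1 + β * x / θ) := by
    rw [Real.rpow_sub hx, Real.rpow_one]
  rw [hb]
  have hbne : (1 : ℝ) + β * x / θ ≠ 0 := hx.ne'
  have hθβ : θ + β * x ≠ 0 := by
    have : θ + β * x = θ * (1 + β * x / θ) := by field_simp
    rw [this]; exact mul_ne_zero hθ.ne' hbne
  field_simp
  ring

lemma gpd_integral_A1 {θ β : ℝ} (hθ : 0 < θ) (hβ : 0 < β) {t : ℝ} (ht : 0 ≤ t) :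
    ∫ x in (0:ℝ)..t, (β + 1) / (θ + β * x) * x * ((1 / θ) * (1 + β * x / θ) ^ (-1 / β - 1))
      = 1 - ((β + 1) * t / θ + 1) * (1 + β * t / θ) ^ (-1 / β - 1) := by
  have hpos : ∀ x ∈ uIcc (0:ℝ) t, 0 < 1 + β * x / θ := by
    intro x hx
    rw [uIcc_of_le ht] at hx
    exact gpd_base_pos hθ hβ hx.1
  rw [intervalIntegral.integral_eq_sub_of_hasDerivAt
    (fun x hx => gpd_hasDerivAt_A1 hθ hβ (hpos x hx)) ?_]
  · norm_num; ring
  · apply ContinuousOn.intervalIntegrable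
    intro x hx
    have hθβ : θ + β * x ≠ 0 := by
      have h := hpos x hx
      have : θ + β * x = θ * (1 + β * x / θ) := by field_simp
      rw [this]; exact mul_ne_zero hθ.ne' h.ne'
    exact (((continuousAt_const.div (continuousAt_const.add
      (continuousAt_const.mul continuousAt_id)) hθβ).mul continuousAt_id).mul
      (continuousAt_const.mul (gpd_continuousAt hθ (-1/β-1) (hpos x hx)))).continuousWithinAt

lemma gpd_hasDerivAt_A2 {θ β : ℝ} (hθ : 0 < θ) (hβ : 0 < β) {x : ℝ}
    (hx : 0 < 1 + β * x / θ) :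
    HasDerivAt (fun y : ℝ => -(1 / θ) * (1 + β * y / θ) ^ (-1 / β - 1))
      ((β + 1) / (θ + β * x) * ((1 / θ) * (1 + β * x / θ) ^ (-1 / β - 1))) x := by
  have h2 := (gpd_hasDerivAt hθ (-1/β-1) hx).const_mul (-(1/θ))
  refine h2.congr_deriv ?_
  have hb : (1 + β * x / θ) ^ (-1 / β - 1 - 1)
      = (1 + β * x / θ) ^ (-1 / β - 1) / (1 + β * x / θ) := by
    rw [Real.rpow_sub hx, Real.rpow_one]
  rw [hb]
  have hbne : (1 : ℝ) + β * x / θ ≠ 0 := hx.ne'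
  have hθβ : θ + β * x ≠ 0 := by
    have : θ + β * x = θ * (1 + β * x / θ) := by field_simp
    rw [this]; exact mul_ne_zero hθ.ne' hbne
  field_simp
  ring

lemma gpd_tendsto_A2 {θ β : ℝ} (hθ : 0 < θ) (hβ : 0 < β) :
    Tendsto (fun y : ℝ => -(1 / θ) * (1 + β * y / θ) ^ (-1 / β - 1)) atTop (𝓝 0) := by
  have h3 : Tendsto (fun y : ℝ => 1 + β * y / θ) atTop atTop := by
    apply tendsto_atTop_add_const_left
    exact (tendsto_id.const_mul_atTop hβ).atTop_div_const hθ
  have he : (-1 / β - 1 : ℝ) = -(1 / β + 1) := by ring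
  have h4 : Tendsto (fun y : ℝ => (1 + β * y / θ) ^ (-1 / β - 1)) atTop (𝓝 0) := by
    rw [he]
    exact (tendsto_rpow_neg_atTop (by positivity)).comp h3
  simpa using h4.const_mul (-(1/θ))

lemma gpd_nonneg_integrand {θ β : ℝ} (hθ : 0 < θ) (hβ : 0 < β) {t : ℝ} (ht : 0 ≤ t) :
    ∀ x ∈ Ioi t, 0 ≤ (β + 1) / (θ + β * x) * ((1 / θ) * (1 + β * x / θ) ^ (-1 / β - 1)) := by
  intro x hxt
  have hx0 : 0 ≤ x := ht.trans (le_of_lt hxt)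
  have h1 : 0 < θ + β * x := by positivity
  have h2 : 0 ≤ (1 + β * x / θ) ^ (-1 / β - 1) := Real.rpow_nonneg (gpd_base_pos hθ hβ hx0).le _
  positivity

lemma gpd_integrableOn_tail {θ β : ℝ} (hθ : 0 < θ) (hβ : 0 < β) {t : ℝ} (ht : 0 ≤ t) :
    IntegrableOn (fun x => (β + 1) / (θ + β * x) * ((1 / θ) * (1 + β * x / θ) ^ (-1 / β - 1)))
      (Ioi t) := by
  refine integrableOn_Ioi_deriv_of_nonneg ?_
    (fun x hx => gpd_hasDerivAt_A2 hθ hβ (gpd_base_pos hθ hβ (ht.trans hx.out.le)))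
    (gpd_nonneg_integrand hθ hβ ht) (gpd_tendsto_A2 hθ hβ)
  exact (gpd_hasDerivAt_A2 hθ hβ (gpd_base_pos hθ hβ ht)).continuousAt.continuousWithinAt

lemma gpd_integral_tail {θ β : ℝ} (hθ : 0 < θ) (hβ : 0 < β) {t : ℝ} (ht : 0 ≤ t) :
    ∫ x in Ioi t, (β + 1) / (θ + β * x) * ((1 / θ) * (1 + β * x / θ) ^ (-1 / β - 1))
      = (1 / θ) * (1 + β * t / θ) ^ (-1 / β - 1) := by
  rw [integral_Ioi_of_hasDerivAt_of_tendsto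
    (gpd_hasDerivAt_A2 hθ hβ (gpd_base_pos hθ hβ ht)).continuousAt.continuousWithinAt
    (fun x hx => gpd_hasDerivAt_A2 hθ hβ (gpd_base_pos hθ hβ (ht.trans hx.out.le)))
    (gpd_integrableOn_tail hθ hβ ht) (gpd_tendsto_A2 hθ hβ)]
  ring



lemma gpd_cdf_nonpos {Ω : Type*} [MeasureSpace Ω] {X : Ω → ℝ}
    (hpos : ∀ᵐ ω ∂ℙ, 0 < X ω) {s : ℝ} (hs : s ≤ 0) :
    ℙ {ω | X ω ≤ s} = 0 := by
  refine measure_mono_null (fun ω hω => ?_) (ae_iff.mp hpos)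
  simp only [mem_setOf_eq] at *
  intro h
  linarith

lemma gpd_forward {Ω : Type*} [MeasureSpace Ω] [IsProbabilityMeasure (ℙ : Measure Ω)]
    {θ β : ℝ} (hθ : 0 < θ) (hβ : 0 < β) {X : Ω → ℝ} (hX : Measurable X)
    (hpos : ∀ᵐ ω ∂ℙ, 0 < X ω)
    (hcdf : ∀ t : ℝ, 0 < t → (ℙ {ω | X ω ≤ t}).toReal = 1 - (1 + β * t / θ) ^ (-1 / β))
    {t : ℝ} (ht : 0 < t) :
    ∫ ω, ((β + 1) / (θ + β * X ω)) * min (X ω) t ∂ℙ = 1 - (1 + β * t / θ) ^ (-1 / β) := by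
  set pdf : ℝ → ℝ := fun x => (1 / θ) * (1 + β * x / θ) ^ (-1 / β - 1) with hpdf
  have pdf_meas : Measurable pdf := measurable_const.mul
    ((((measurable_const.mul measurable_id).div_const θ).const_add 1).pow_const _)
  set fd : ℝ → ℝ≥0 := fun x => Real.toNNReal (pdf x) with hfd
  have fd_meas : Measurable fd := pdf_meas.real_toNNReal
  set μ := Measure.map X ℙ with hμ
  haveI : IsProbabilityMeasure μ := Measure.isProbabilityMeasure_map hX.aemeasurable
  set ν := (volume.restrict (Ioi (0:ℝ))).withDensity (fun x => (fd x : ℝ≥0∞)) with hν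
  have hμIic : ∀ s : ℝ, μ (Iic s) = ℙ {ω | X ω ≤ s} := fun s => by
    rw [hμ, Measure.map_apply hX measurableSet_Iic]; rfl
  have pdf_nonneg : ∀ x : ℝ, 0 ≤ x → 0 ≤ pdf x := fun x hx => by
    have h1 := gpd_base_pos hθ hβ hx (β := β)
    have h2 := Real.rpow_nonneg h1.le (-1/β-1)
    rw [hpdf]
    positivity
  have pdf_contAt : ∀ x : ℝ, 0 ≤ x → ContinuousAt pdf x := fun x hx =>
    continuousAt_const.mul (gpd_continuousAt hθ (-1/β-1) (gpd_base_pos hθ hβ hx))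
  have hνIic : ∀ s : ℝ, ν (Iic s) = μ (Iic s) := by
    intro s
    rw [hν, withDensity_apply _ measurableSet_Iic, Measure.restrict_restrict measurableSet_Iic]
    rcases le_or_gt s 0 with hs | hs
    · have hE : Iic s ∩ Ioi 0 = (∅ : Set ℝ) := by
        ext x
        simp only [mem_inter_iff, mem_Iic, mem_Ioi, mem_empty_iff_false, iff_false, not_and]
        intro h1; linarith
      rw [hE, hμIic s, gpd_cdf_nonpos hpos hs]
      simp
    · have hE : Iic s ∩ Ioi 0 = Ioc 0 s := by
        ext x
        simp only [mem_inter_iff, mem_Iic, mem_Ioi, mem_Ioc]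
        tauto
      rw [hE]
      have hInt : IntegrableOn pdf (Ioc 0 s) := by
        refine (ContinuousOn.integrableOn_Icc (f := pdf) (a := 0) (b := s) ?_).mono_set
          Ioc_subset_Icc_self
        exact fun x hx => (pdf_contAt x hx.1).continuousWithinAt
      have hnn : 0 ≤ᵐ[volume.restrict (Ioc (0:ℝ) s)] pdf := by
        filter_upwards [ae_restrict_mem measurableSet_Ioc] with x hx
        exact pdf_nonneg x hx.1.le
      have h1 : ∫⁻ x in Ioc 0 s, (fd x : ℝ≥0∞) = ENNReal.ofReal (∫ x in Ioc 0 s, pdf x) := by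
        rw [ofReal_integral_eq_lintegral_ofReal hInt hnn]
        rfl
      have h2 : ∫ x in Ioc 0 s, pdf x = 1 - (1 + β * s / θ) ^ (-1 / β) := by
        rw [← intervalIntegral.integral_of_le hs.le]
        rw [hpdf]
        rw [gpd_integral_A0 hθ hβ (1/θ) hs.le]
        field_simp
      rw [h1, h2, hμIic s]
      have h3 := hcdf s hs
      rw [← h3, ENNReal.ofReal_toReal (measure_ne_top _ _)]
  haveI hνfin : IsFiniteMeasure ν := by
    constructor
    have hle : ν univ ≤ 1 := by
      refine le_of_tendsto' (tendsto_measure_Iic_atTop ν) (fun x => ?_)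
      rw [hνIic x]
      exact prob_le_one
    exact lt_of_le_of_lt hle ENNReal.one_lt_top
  have hμν : μ = ν := Measure.ext_of_Iic μ ν (fun a => (hνIic a).symm)
  have g_meas : Measurable (fun x : ℝ => (β + 1) / (θ + β * x) * min x t) :=
    (measurable_const.div (measurable_const.add (measurable_const.mul measurable_id))).mul
      (measurable_id.min measurable_const)
  have key : ∫ ω, ((β + 1) / (θ + β * X ω)) * min (X ω) t ∂ℙ
      = ∫ x, (β + 1) / (θ + β * x) * min x t ∂μ := by
    rw [hμ, integral_map hX.aemeasurable g_meas.aestronglyMeasurable]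
  rw [key, hμν, hν, integral_withDensity_eq_integral_smul fd_meas]
  have congr1 : ∫ x in Ioi (0:ℝ), fd x • ((β + 1) / (θ + β * x) * min x t)
      = ∫ x in Ioi (0:ℝ), pdf x * ((β + 1) / (θ + β * x) * min x t) := by
    refine setIntegral_congr_fun measurableSet_Ioi (fun x hx => ?_)
    have : (fd x : ℝ) = pdf x := Real.coe_toNNReal _ (pdf_nonneg x (le_of_lt hx))
    rw [NNReal.smul_def, this]
    simp
  rw [congr1]
  have hsplit : Ioi (0:ℝ) = Ioc 0 t ∪ Ioi t := (Ioc_union_Ioi_eq_Ioi ht.le).symm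
  have hI1 : IntegrableOn (fun x => pdf x * ((β + 1) / (θ + β * x) * min x t)) (Ioc 0 t) := by
    refine (ContinuousOn.integrableOn_Icc ?_).mono_set Ioc_subset_Icc_self
    intro x hx
    have hne : θ + β * x ≠ 0 := by
      have : 0 ≤ x := hx.1
      positivity
    exact ((pdf_contAt x hx.1).mul ((continuousAt_const.div
      (continuousAt_const.add (continuousAt_const.mul continuousAt_id)) hne).mul
      (continuousAt_id.min continuousAt_const))).continuousWithinAt
  have heq2 : EqOn (fun x => t * ((β + 1) / (θ + β * x) * ((1 / θ) * (1 + β * x / θ) ^ (-1 / β - 1))))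
      (fun x => pdf x * ((β + 1) / (θ + β * x) * min x t)) (Ioi t) := by
    intro x hx
    have : min x t = t := min_eq_right (le_of_lt hx)
    simp only [hpdf, this]
    ring
  have hI2 : IntegrableOn (fun x => pdf x * ((β + 1) / (θ + β * x) * min x t)) (Ioi t) :=
    IntegrableOn.congr_fun ((gpd_integrableOn_tail hθ hβ ht.le).const_mul t) heq2 measurableSet_Ioi
  rw [hsplit, setIntegral_union (Ioc_disjoint_Ioi le_rfl) measurableSet_Ioi hI1 hI2]
  have hv1 : ∫ x in Ioc 0 t, pdf x * ((β + 1) / (θ + β * x) * min x t)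
      = 1 - ((β + 1) * t / θ + 1) * (1 + β * t / θ) ^ (-1 / β - 1) := by
    rw [setIntegral_congr_fun measurableSet_Ioc
      (g := fun x => (β + 1) / (θ + β * x) * x * ((1 / θ) * (1 + β * x / θ) ^ (-1 / β - 1)))
      (fun x hx => by
        have : min x t = x := min_eq_left hx.2
        simp only [hpdf, this]
        ring)]
    rw [← intervalIntegral.integral_of_le ht.le]
    exact gpd_integral_A1 hθ hβ ht.le
  have hv2 : ∫ x in Ioi t, pdf x * ((β + 1) / (θ + β * x) * min x t)
      = t * ((1 / θ) * (1 + β * t / θ) ^ (-1 / β - 1)) := by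
    rw [← setIntegral_congr_fun measurableSet_Ioi heq2]
    rw [MeasureTheory.integral_const_mul, gpd_integral_tail hθ hβ ht.le]
  rw [hv1, hv2]
  have hb := gpd_base_pos hθ hβ ht.le (β := β)
  rw [show (-1/β : ℝ) = (-1/β - 1) + 1 by ring, Real.rpow_add_one hb.ne']
  ring


section bwd
variable {Ω : Type*} [MeasureSpace Ω] [IsProbabilityMeasure (ℙ : Measure Ω)]
  {θ β : ℝ} {X : Ω → ℝ}

/-- pointwise bound on the Stein kernel -/
lemma gpd_h_bound (hθ : 0 < θ) (hβ : 0 < β) {x : ℝ} (hx : 0 < x) :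
    0 < (β + 1) / (θ + β * x) ∧ (β + 1) / (θ + β * x) ≤ (β + 1) / θ := by
  have h1 : 0 < θ + β * x := by positivity
  constructor
  · positivity
  · apply div_le_div_of_nonneg_left (by linarith) hθ
    nlinarith

lemma gpd_h_meas (θ β : ℝ) (hX : Measurable X) :
    Measurable (fun ω => (β + 1) / (θ + β * X ω)) :=
  measurable_const.div (measurable_const.add (measurable_const.mul hX))

/-- `H s = E[h(X) 1_{X > s}]` -/
noncomputable def gpdH (θ β : ℝ) (X : Ω → ℝ) (s : ℝ) : ℝ :=
  ∫ ω, (if s < X ω then (β + 1) / (θ + β * X ω) else 0) ∂ℙ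

lemma gpdH_integrand_int (hθ : 0 < θ) (hβ : 0 < β) (hX : Measurable X)
    (hpos : ∀ᵐ ω ∂ℙ, 0 < X ω) (s : ℝ) :
    Integrable (fun ω => (if s < X ω then (β + 1) / (θ + β * X ω) else 0)) ℙ := by
  refine Integrable.mono' (integrable_const ((β + 1) / θ)) ?_ ?_
  · exact ((Measurable.ite (measurableSet_lt measurable_const hX) (gpd_h_meas θ β hX)
      measurable_const)).aestronglyMeasurable
  · filter_upwards [hpos] with ω hω
    rcases gpd_h_bound hθ hβ hω with ⟨h1, h2⟩
    rw [Real.norm_eq_abs]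
    split_ifs
    · rw [abs_of_pos h1]; exact h2
    · simp; positivity

lemma gpdH_antitone (hθ : 0 < θ) (hβ : 0 < β) (hX : Measurable X)
    (hpos : ∀ᵐ ω ∂ℙ, 0 < X ω) : Antitone (gpdH θ β X) := by
  intro s s' hss'
  refine integral_mono_ae (gpdH_integrand_int hθ hβ hX hpos s')
    (gpdH_integrand_int hθ hβ hX hpos s) ?_
  filter_upwards [hpos] with ω hω
  rcases gpd_h_bound hθ hβ hω with ⟨h1, _⟩
  split_ifs with c1 c2 c2
  · exact le_rfl
  · exact absurd (lt_of_le_of_lt hss' c1) c2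
  · exact h1.le
  · exact le_rfl

lemma gpdH_meas (hθ : 0 < θ) (hβ : 0 < β) (hX : Measurable X)
    (hpos : ∀ᵐ ω ∂ℙ, 0 < X ω) : Measurable (gpdH θ β X) :=
  (gpdH_antitone hθ hβ hX hpos).measurable

lemma gpdH_nonneg (hθ : 0 < θ) (hβ : 0 < β) (hX : Measurable X)
    (hpos : ∀ᵐ ω ∂ℙ, 0 < X ω) (s : ℝ) : 0 ≤ gpdH θ β X s := by
  refine integral_nonneg_of_ae ?_
  filter_upwards [hpos] with ω hω
  rcases gpd_h_bound hθ hβ hω with ⟨h1, _⟩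
  simp only [Pi.zero_apply]
  split_ifs
  · exact h1.le
  · exact le_rfl

lemma gpdH_bound (hθ : 0 < θ) (hβ : 0 < β) (hX : Measurable X)
    (hpos : ∀ᵐ ω ∂ℙ, 0 < X ω) (s : ℝ) : gpdH θ β X s ≤ (β + 1) / θ := by
  have := norm_integral_le_of_norm_le_const (μ := ℙ)
    (f := fun ω => (if s < X ω then (β + 1) / (θ + β * X ω) else 0)) (C := (β + 1) / θ) ?_
  · rw [Real.norm_eq_abs] at this
    simp only [measure_univ, probReal_univ, ENNReal.toReal_one, mul_one] at this
    exact (abs_le.mp this).2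
  · filter_upwards [hpos] with ω hω
    rcases gpd_h_bound hθ hβ hω with ⟨h1, h2⟩
    rw [Real.norm_eq_abs]
    split_ifs
    · rw [abs_of_pos h1]; exact h2
    · simp; positivity

end bwd


section bwd2
variable {Ω : Type*} [MeasureSpace Ω] [IsProbabilityMeasure (ℙ : Measure Ω)]
  {θ β : ℝ} {X : Ω → ℝ}



lemma gpd_fubini (hθ : 0 < θ) (hβ : 0 < β) (hX : Measurable X)
    (hpos : ∀ᵐ ω ∂ℙ, 0 < X ω) {t : ℝ} (ht : 0 < t) :
    ∫ ω, ((β + 1) / (θ + β * X ω)) * min (X ω) t ∂ℙ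
      = ∫ s in Ioc (0:ℝ) t, gpdH θ β X s := by
  set K : Ω → ℝ → ℝ := fun ω s => if s < X ω then (β + 1) / (θ + β * X ω) else 0 with hK
  set νt := volume.restrict (Ioc (0:ℝ) t) with hνt
  haveI : IsFiniteMeasure νt := ⟨by
    rw [hνt, Measure.restrict_apply_univ]; exact measure_Ioc_lt_top⟩
  have hKmeas : Measurable (Function.uncurry K) := by
    refine Measurable.ite ?_ ?_ measurable_const
    · exact measurableSet_lt measurable_snd (hX.comp measurable_fst)
    · exact (measurable_const.div
        (measurable_const.add (measurable_const.mul (hX.comp measurable_fst))))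
  have haepos : ∀ᵐ p ∂((ℙ : Measure Ω).prod νt), 0 < X p.1 := by
    rw [ae_iff]
    have hsub : {p : Ω × ℝ | ¬ 0 < X p.1} ⊆ {ω | ¬ 0 < X ω} ×ˢ (univ : Set ℝ) := by
      intro p hp; exact ⟨hp, trivial⟩
    refine measure_mono_null hsub ?_
    rw [Measure.prod_prod]
    rw [ae_iff] at hpos
    rw [hpos]
    simp
  have hKint : Integrable (Function.uncurry K) ((ℙ : Measure Ω).prod νt) := by
    refine Integrable.mono' (integrable_const ((β + 1) / θ)) hKmeas.aestronglyMeasurable ?_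
    filter_upwards [haepos] with p hp
    rcases gpd_h_bound hθ hβ hp with ⟨h1, h2⟩
    rw [Real.norm_eq_abs]
    simp only [Function.uncurry, hK]
    split_ifs
    · rw [abs_of_pos h1]; exact h2
    · simp; positivity
  have hswap := integral_integral_swap (f := K) (μ := ℙ) (ν := νt) hKint
  have hleft : ∫ ω, ((β + 1) / (θ + β * X ω)) * min (X ω) t ∂ℙ
      = ∫ ω, ∫ s, K ω s ∂νt ∂ℙ := by
    refine integral_congr_ae ?_
    filter_upwards [hpos] with ω hω
    have hinner : ∫ s, K ω s ∂νt = ∫ s in Ioc (0:ℝ) t, Set.indicator (Iio (X ω))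
        (fun _ => (β + 1) / (θ + β * X ω)) s := by
      rw [hνt]
      refine setIntegral_congr_fun measurableSet_Ioc (fun s _ => ?_)
      simp only [hK, Set.indicator_apply, mem_Iio]
    rw [hinner, setIntegral_indicator measurableSet_Iio]
    rcases le_or_gt (X ω) t with hxt | hxt
    · have hset : Ioc (0:ℝ) t ∩ Iio (X ω) = Ioo 0 (X ω) := by
        ext s
        simp only [mem_inter_iff, mem_Ioc, mem_Iio, mem_Ioo]
        constructor
        · rintro ⟨⟨a, b⟩, c⟩; exact ⟨a, c⟩
        · rintro ⟨a, b⟩; exact ⟨⟨a, le_trans b.le hxt⟩, b⟩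
      rw [hset, setIntegral_const, measureReal_def, Real.volume_Ioo, min_eq_left hxt,
        ENNReal.toReal_ofReal (by linarith)]
      simp [smul_eq_mul]; ring
    · have hset : Ioc (0:ℝ) t ∩ Iio (X ω) = Ioc 0 t := by
        ext s
        simp only [mem_inter_iff, mem_Ioc, mem_Iio]
        constructor
        · rintro ⟨a, _⟩; exact a
        · rintro ⟨a, b⟩; exact ⟨⟨a, b⟩, lt_of_le_of_lt b hxt⟩
      rw [hset, setIntegral_const, measureReal_def, Real.volume_Ioc, min_eq_right hxt.le,
        ENNReal.toReal_ofReal (by linarith)]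
      simp [smul_eq_mul]; ring
  rw [hleft, hswap, hνt]
  rfl

end bwd2




section S
variable {Ω : Type*} [MeasureSpace Ω] [IsProbabilityMeasure (ℙ : Measure Ω)]
  {θ β : ℝ} {X : Ω → ℝ}


lemma gpd_backward (hθ : 0 < θ) (hβ : 0 < β) (hX : Measurable X)
    (hpos : ∀ᵐ ω ∂ℙ, 0 < X ω)
    (hst : ∀ t : ℝ, 0 < t → (ℙ {ω | X ω ≤ t}).toReal =
      ∫ ω, ((β + 1) / (θ + β * X ω)) * min (X ω) t ∂ℙ)
    {t : ℝ} (ht : 0 < t) :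
    (ℙ {ω | X ω ≤ t}).toReal = 1 - (1 + β * t / θ) ^ (-1 / β) := by
  set H := gpdH θ β X with hHdef
  have Hmeas := gpdH_meas hθ hβ hX hpos
  have Hnn := gpdH_nonneg hθ hβ hX hpos
  have Hbd := gpdH_bound hθ hβ hX hpos
  have hF : ∀ s : ℝ, 0 < s → (ℙ {ω | X ω ≤ s}).toReal = ∫ u in Ioc (0:ℝ) s, H u :=
    fun s hs => (hst s hs).trans (gpd_fubini hθ hβ hX hpos hs)
  set μ := Measure.map X ℙ with hμ
  haveI : IsProbabilityMeasure μ := Measure.isProbabilityMeasure_map hX.aemeasurable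
  have hμIic : ∀ s : ℝ, μ (Iic s) = ℙ {ω | X ω ≤ s} := fun s => by
    rw [hμ, Measure.map_apply hX measurableSet_Iic]; rfl
  set ν := (volume.restrict (Ioi (0:ℝ))).withDensity (fun x => ((H x).toNNReal : ℝ≥0∞)) with hν
  have HIntOn : ∀ s : Set ℝ, volume s ≠ ∞ → IntegrableOn H s := by
    intro s hsfin
    haveI : IsFiniteMeasure (volume.restrict s) :=
      ⟨by rw [Measure.restrict_apply_univ]; exact hsfin.lt_top⟩
    refine Integrable.mono' (integrable_const ((β + 1) / θ)) Hmeas.aestronglyMeasurable ?_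
    refine ae_of_all _ (fun u => ?_)
    rw [Real.norm_eq_abs, abs_of_nonneg (Hnn u)]
    exact Hbd u
  have hνIic : ∀ s : ℝ, ν (Iic s) = μ (Iic s) := by
    intro s
    rw [hν, withDensity_apply _ measurableSet_Iic, Measure.restrict_restrict measurableSet_Iic]
    rcases le_or_gt s 0 with hs | hs
    · have hE : Iic s ∩ Ioi 0 = (∅ : Set ℝ) := by
        ext x
        simp only [mem_inter_iff, mem_Iic, mem_Ioi, mem_empty_iff_false, iff_false, not_and]
        intro h1; linarith
      rw [hE, hμIic s, gpd_cdf_nonpos hpos hs]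
      simp
    · have hE : Iic s ∩ Ioi 0 = Ioc 0 s := by
        ext x
        simp only [mem_inter_iff, mem_Iic, mem_Ioi, mem_Ioc]
        tauto
      rw [hE]
      have hnn2 : 0 ≤ᵐ[volume.restrict (Ioc (0:ℝ) s)] H := ae_of_all _ Hnn
      have h1 : ∫⁻ x in Ioc 0 s, ((H x).toNNReal : ℝ≥0∞)
          = ENNReal.ofReal (∫ x in Ioc 0 s, H x) := by
        rw [ofReal_integral_eq_lintegral_ofReal (HIntOn _ measure_Ioc_lt_top.ne) hnn2]
        rfl
      rw [h1, ← hF s hs, hμIic s, ENNReal.ofReal_toReal (measure_ne_top _ _)]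
  haveI hνfin : IsFiniteMeasure ν := by
    constructor
    have hle : ν univ ≤ 1 := by
      refine le_of_tendsto' (tendsto_measure_Iic_atTop ν) (fun x => ?_)
      rw [hνIic x]
      exact prob_le_one
    exact lt_of_le_of_lt hle ENNReal.one_lt_top
  have hμν : μ = ν := Measure.ext_of_Iic μ ν (fun a => (hνIic a).symm)
  -- D and c
  have hhℝmeas : Measurable (fun x : ℝ => (β + 1) / (θ + β * x)) :=
    measurable_const.div (measurable_const.add (measurable_const.mul measurable_id))
  have hDrep : ∀ s : ℝ, 0 < s →
      (∫ ω, (if X ω ≤ s then (β + 1) / (θ + β * X ω) else 0) ∂ℙ)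
        = ∫ u in (0:ℝ)..s, (β + 1) / (θ + β * u) * H u := by
    intro s hs
    have g_meas : Measurable (fun x : ℝ => if x ≤ s then (β + 1) / (θ + β * x) else 0) :=
      Measurable.ite measurableSet_Iic hhℝmeas measurable_const
    have step1 : (∫ ω, (if X ω ≤ s then (β + 1) / (θ + β * X ω) else 0) ∂ℙ)
        = ∫ x, (if x ≤ s then (β + 1) / (θ + β * x) else 0) ∂μ := by
      rw [hμ, integral_map hX.aemeasurable g_meas.aestronglyMeasurable]
    rw [step1, hμν, hν, integral_withDensity_eq_integral_smul Hmeas.real_toNNReal]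
    have step2 : ∫ x in Ioi (0:ℝ), (H x).toNNReal • (if x ≤ s then (β + 1) / (θ + β * x) else 0)
        = ∫ x in Ioi (0:ℝ), Set.indicator (Iic s) (fun x => (β + 1) / (θ + β * x) * H x) x := by
      refine setIntegral_congr_fun measurableSet_Ioi (fun x hx => ?_)
      rw [NNReal.smul_def, Real.coe_toNNReal _ (Hnn x)]
      simp only [Set.indicator_apply, mem_Iic, smul_eq_mul]
      split_ifs
      · ring
      · ring
    rw [step2, setIntegral_indicator measurableSet_Iic, Ioi_inter_Iic,
      ← intervalIntegral.integral_of_le hs.le]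
  have hDint : ∀ s : ℝ, Integrable (fun ω => (if X ω ≤ s then (β + 1) / (θ + β * X ω) else 0)) ℙ := by
    intro s
    refine Integrable.mono' (integrable_const ((β + 1) / θ)) ?_ ?_
    · exact (Measurable.ite (measurableSet_le hX measurable_const) (gpd_h_meas θ β hX)
        measurable_const).aestronglyMeasurable
    · filter_upwards [hpos] with ω hω
      rcases gpd_h_bound hθ hβ hω with ⟨h1, h2⟩
      rw [Real.norm_eq_abs]
      split_ifs
      · rw [abs_of_pos h1]; exact h2
      · simp; positivity
  have hcint : Integrable (fun ω => (β + 1) / (θ + β * X ω)) ℙ := by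
    refine Integrable.mono' (integrable_const ((β + 1) / θ)) (gpd_h_meas θ β hX).aestronglyMeasurable ?_
    filter_upwards [hpos] with ω hω
    rcases gpd_h_bound hθ hβ hω with ⟨h1, h2⟩
    rw [Real.norm_eq_abs, abs_of_pos h1]; exact h2
  set c := ∫ ω, (β + 1) / (θ + β * X ω) ∂ℙ with hc
  have hHDc : ∀ s : ℝ, H s + (∫ ω, (if X ω ≤ s then (β + 1) / (θ + β * X ω) else 0) ∂ℙ) = c := by
    intro s
    rw [hHdef, gpdH, ← integral_add (gpdH_integrand_int hθ hβ hX hpos s) (hDint s), hc]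
    refine integral_congr_ae (ae_of_all _ (fun ω => ?_))
    dsimp only
    rcases le_or_gt (X ω) s with hxs | hxs
    · rw [if_neg (not_lt.mpr hxs), if_pos hxs]; ring
    · rw [if_pos hxs, if_neg (not_le.mpr hxs)]; ring
  -- the integral equation and ODE
  set g : ℝ → ℝ := fun u => if 0 ≤ u then (β + 1) / (θ + β * u) * H u else 0 with hg
  have hgmeas : Measurable g := Measurable.ite measurableSet_Ici (hhℝmeas.mul Hmeas) measurable_const
  have hhub : ∀ u : ℝ, 0 ≤ u → 0 < (β + 1) / (θ + β * u) ∧ (β + 1) / (θ + β * u) ≤ (β + 1) / θ := by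
    intro u hu
    have h1 : 0 < θ + β * u := by nlinarith
    refine ⟨by positivity, ?_⟩
    apply div_le_div_of_nonneg_left (by linarith) hθ
    nlinarith
  have hgbd : ∀ u : ℝ, ‖g u‖ ≤ ((β + 1) / θ) * ((β + 1) / θ) := by
    intro u
    rw [hg]
    simp only []
    split_ifs with h
    · rcases hhub u h with ⟨h1, h2⟩
      rw [Real.norm_eq_abs, abs_of_nonneg (mul_nonneg h1.le (Hnn u))]
      exact mul_le_mul h2 (Hbd u) (Hnn u) (by positivity)
    · simp; positivity
  have hgint : ∀ a b : ℝ, IntervalIntegrable g volume a b := by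
    intro a b
    rw [intervalIntegrable_iff]
    haveI : IsFiniteMeasure (volume.restrict (uIoc a b)) :=
      ⟨by rw [Measure.restrict_apply_univ]; exact measure_Ioc_lt_top⟩
    exact Integrable.mono' (integrable_const _) hgmeas.aestronglyMeasurable
      (ae_of_all _ hgbd)
  set Prim : ℝ → ℝ := fun s => ∫ u in (0:ℝ)..s, g u with hPrim
  have hPrimCont : Continuous Prim := intervalIntegral.continuous_primitive hgint 0
  have hHrep : ∀ s : ℝ, 0 ≤ s → H s = c - Prim s := by
    intro s hs0
    rcases eq_or_lt_of_le hs0 with h0 | hsp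
    · rw [← h0]
      have hD0 : (∫ ω, (if X ω ≤ (0:ℝ) then (β + 1) / (θ + β * X ω) else 0) ∂ℙ) = 0 := by
        refine integral_eq_zero_of_ae ?_
        filter_upwards [hpos] with ω hω
        rw [if_neg (not_le.mpr hω)]
        simp
      have := hHDc 0
      rw [hD0, add_zero] at this
      rw [this, hPrim]
      simp
    · have h1 := hHDc s
      have h2 := hDrep s hsp
      have h3 : Prim s = ∫ u in (0:ℝ)..s, (β + 1) / (θ + β * u) * H u := by
        rw [hPrim]
        refine intervalIntegral.integral_congr (fun u hu => ?_)
        rw [uIcc_of_le hs0] at hu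
        rw [hg]
        simp only []
        rw [if_pos hu.1]
      rw [h3, ← h2]
      linarith
  have hPrimDeriv : ∀ x : ℝ, 0 < x → HasDerivAt Prim (g x) x := by
    intro x hx
    refine intervalIntegral.integral_hasDerivAt_right (hgint 0 x)
      (hgmeas.stronglyMeasurable.stronglyMeasurableAtFilter) ?_
    have hcongr : (fun u => (β + 1) / (θ + β * u) * (c - Prim u)) =ᶠ[𝓝 x] g := by
      filter_upwards [Ioi_mem_nhds hx] with u hu
      rw [hg]
      simp only []
      rw [if_pos (le_of_lt hu), hHrep u (le_of_lt hu)]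
    refine ContinuousAt.congr ?_ hcongr
    have hne : θ + β * x ≠ 0 := by positivity
    exact (continuousAt_const.div (continuousAt_const.add
      (continuousAt_const.mul continuousAt_id)) hne).mul
      (continuousAt_const.sub hPrimCont.continuousAt)
  have hKconst : ∀ r : ℝ, 0 < r → (c - Prim r) * (1 + β * r / θ) ^ (1/β + 1) = c := by
    intro r hr
    set Kf : ℝ → ℝ := fun s => (c - Prim s) * (1 + β * s / θ) ^ (1/β + 1) with hKf
    have h1 : ContinuousOn Kf (Icc 0 r) := by
      refine ContinuousOn.mul ((continuous_const.sub hPrimCont).continuousOn) ?_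
      exact fun x hx => (gpd_continuousAt hθ (1/β + 1) (gpd_base_pos hθ hβ hx.1)).continuousWithinAt
    have h2 : ∀ x ∈ Ioo 0 r, HasDerivWithinAt Kf 0 (Ioi x) x := by
      intro x hx
      have hb := gpd_base_pos hθ hβ (le_of_lt hx.1) (β := β)
      have hd := ((hasDerivAt_const x c).sub (hPrimDeriv x hx.1)).mul
        (gpd_hasDerivAt hθ (1/β + 1) hb)
      have heq : (0 - g x) * (1 + β * x / θ) ^ (1/β + 1)
          + (c - Prim x) * ((1/β + 1) * (β / θ) * (1 + β * x / θ) ^ (1/β + 1 - 1)) = 0 := by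
        rw [hg]
        simp only []
        rw [if_pos (le_of_lt hx.1), hHrep x (le_of_lt hx.1)]
        have hrw : (1 + β * x / θ) ^ (1/β + 1)
            = (1 + β * x / θ) ^ (1/β + 1 - 1) * (1 + β * x / θ) := by
          rw [← Real.rpow_add_one hb.ne' (1/β + 1 - 1)]
          congr 1
          ring
        rw [hrw]
        have hne : θ + β * x ≠ 0 := by
          have : 0 < x := hx.1
          positivity
        field_simp
        ring
      rw [← heq]
      exact hd.hasDerivWithinAt
    have h4 := intervalIntegral.integral_eq_sub_of_hasDeriv_right_of_le hr.le h1 h2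
      (intervalIntegrable_const (c := (0:ℝ)))
    have h5 : Kf r = Kf 0 := by
      simp only [intervalIntegral.integral_const, smul_zero] at h4
      linarith
    have hK0 : Kf 0 = c := by
      rw [hKf]
      simp only []
      rw [hPrim]
      simp [Real.one_rpow]
    show Kf r = c
    exact h5.trans hK0
  have hH0 : H 0 = c := by
    rw [hHrep 0 le_rfl, hPrim]
    simp
  have hHformula : ∀ r : ℝ, 0 < r → H r = c * (1 + β * r / θ) ^ (-1 / β - 1) := by
    intro r hr
    have hb := gpd_base_pos hθ hβ hr.le (β := β)
    have hbq : (0:ℝ) < (1 + β * r / θ) ^ (1/β + 1) := Real.rpow_pos_of_pos hb _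
    have h1 : c - Prim r = c / (1 + β * r / θ) ^ (1/β + 1) :=
      (eq_div_iff hbq.ne').mpr (hKconst r hr)
    rw [hHrep r hr.le, h1,
      show (-1/β - 1 : ℝ) = -(1/β + 1) by ring, Real.rpow_neg hb.le, div_eq_mul_inv]
  have hFt : ∀ s : ℝ, 0 < s → (ℙ {ω | X ω ≤ s}).toReal
      = c * θ * (1 - (1 + β * s / θ) ^ (-1 / β)) := by
    intro s hs
    have hcongr : EqOn H (fun u => c * (1 + β * u / θ) ^ (-1/β - 1)) (uIcc 0 s) := by
      intro u hu
      rw [uIcc_of_le hs.le] at hu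
      rcases eq_or_lt_of_le hu.1 with h0 | h0
      · rw [← h0, hH0]
        simp [Real.one_rpow]
      · exact hHformula u h0
    rw [hF s hs, ← intervalIntegral.integral_of_le hs.le,
      intervalIntegral.integral_congr hcongr, gpd_integral_A0 hθ hβ c hs.le]
  have hμuniv : Tendsto (fun n : ℝ => (ℙ {ω | X ω ≤ n}).toReal) atTop (𝓝 1) := by
    have h1 : Tendsto (fun n : ℝ => μ (Iic n)) atTop (𝓝 (μ univ)) := tendsto_measure_Iic_atTop μ
    rw [measure_univ] at h1
    have h2 := (ENNReal.tendsto_toReal ENNReal.one_ne_top).comp h1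
    simp only [ENNReal.toReal_one] at h2
    refine h2.congr (fun n => ?_)
    rw [Function.comp_apply, hμIic n]
  have hΦ : Tendsto (fun n : ℝ => c * θ * (1 - (1 + β * n / θ) ^ (-1 / β))) atTop (𝓝 (c * θ)) := by
    have h3 : Tendsto (fun y : ℝ => 1 + β * y / θ) atTop atTop := by
      apply tendsto_atTop_add_const_left
      exact (tendsto_id.const_mul_atTop hβ).atTop_div_const hθ
    have h4 : Tendsto (fun n : ℝ => (1 + β * n / θ) ^ (-1 / β)) atTop (𝓝 0) := by
      rw [show (-1/β : ℝ) = -(1/β) by ring]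
      exact (tendsto_rpow_neg_atTop (by positivity)).comp h3
    have h5 := (tendsto_const_nhds (x := (1:ℝ)) (f := atTop)).sub h4
    rw [sub_zero] at h5
    have h6 := h5.const_mul (c * θ)
    rw [mul_one] at h6
    exact h6
  have hcθ : c * θ = 1 := by
    have heq : (fun n : ℝ => (ℙ {ω | X ω ≤ n}).toReal)
        =ᶠ[atTop] (fun n : ℝ => c * θ * (1 - (1 + β * n / θ) ^ (-1 / β))) := by
      filter_upwards [eventually_gt_atTop (0:ℝ)] with n hn
      exact hFt n hn
    exact (tendsto_nhds_unique (hμuniv.congr' heq) hΦ).symm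
  rw [hFt t ht, hcθ, one_mul]

end S


/-- **Characterization of the GPD with positive shape parameter via Stein's identity.**
A positive-valued random variable `X` has the GPD(θ,β) distribution (CDF
`F(t) = 1-(1+βt/θ)^(-1/β)` for `t > 0`) if and only if its CDF satisfies
`F(t) = E[((β+1)/(θ+βX))·min(X,t)]` for all `t > 0`. -/
theorem gpd_characterization_stein_pos_shape {Ω : Type*} [MeasureSpace Ω]
    [IsProbabilityMeasure (ℙ : Measure Ω)]
    (θ β : ℝ) (hθ : 0 < θ) (hβ : 0 < β)
    (X : Ω → ℝ) (hX : Measurable X) (hpos : ∀ᵐ ω ∂ℙ, 0 < X ω) :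
    (∀ t : ℝ, 0 < t → (ℙ {ω | X ω ≤ t}).toReal = 1 - (1 + β * t / θ) ^ (-1 / β)) ↔
      (∀ t : ℝ, 0 < t → (ℙ {ω | X ω ≤ t}).toReal =
        ∫ ω, ((β + 1) / (θ + β * X ω)) * min (X ω) t ∂ℙ) := by
  constructor
  · intro hcdf t ht
    rw [hcdf t ht]
    exact (gpd_forward hθ hβ hX hpos hcdf ht).symm
  · intro hst t ht
    exact gpd_backward hθ hβ hX hpos hst ht
end

section
/- Let T∈(0,∞], let S:[0,T)→(0,1] be a continuously differentiable survival function with S(0)=1 and S'(t)<0 on [0,T), with ∫₀^T S(x)² dx < ∞, and let h(t)=−S'(t)/S(t) be the associated hazard rate with h(0)>0. Suppose there is a constant k≠0 such that for all t∈[0,T), (−1/2)·(∫_t^T S(x)² dx)/S(t)² · h(t) = k. Then for all t∈[0,T), h(t) = 1/(c₁t+c₂), where c₁=(1+4k)/(2k) and c₂=1/h(0); that is, S is the survival function of a generalized Pareto distribution. -/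
open MeasureTheory Set

/-- **Constant extropy-hazard product characterizes the GPD hazard rate.**
Let `T ∈ (0,∞]`, let `S : [0,T) → (0,1]` be a continuously differentiable survival
function with `S(0) = 1` and `S' < 0` on `[0,T)`, with `∫₀^T S² < ∞`, and let
`h = -S'/S` be the hazard rate with `h(0) > 0`. If there is a constant `k ≠ 0` with
`(-1/2)·(∫_t^T S(x)² dx)/S(t)² · h(t) = k` for all `t ∈ [0,T)`, then
`h(t) = 1/(c₁t + c₂)` with `c₁ = (1+4k)/(2k)` and `c₂ = 1/h(0)`; i.e. `S` is the
survival function of a generalized Pareto distribution. -/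
theorem hazard_const_extropy_implies_gpd
    (T : EReal) (hT : 0 < T)
    (S S' : ℝ → ℝ) (D : Set ℝ) (hD : D = {x : ℝ | 0 ≤ x ∧ (x : EReal) < T})
    (hS0 : S 0 = 1)
    (hSrange : ∀ t ∈ D, 0 < S t ∧ S t ≤ 1)
    (hderiv : ∀ t ∈ D, HasDerivAt S (S' t) t)
    (hS'cont : ContinuousOn S' D)
    (hS'neg : ∀ t ∈ D, S' t < 0)
    (hint : IntegrableOn (fun x => S x ^ 2) D)
    (hh0 : 0 < -S' 0 / S 0)
    (k : ℝ) (hk : k ≠ 0)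
    (hconst : ∀ t ∈ D,
      -(1 / 2) * (∫ x in D ∩ Ioi t, S x ^ 2) / S t ^ 2 * (-S' t / S t) = k) :
    ∀ t ∈ D, -S' t / S t = 1 / ((1 + 4 * k) / (2 * k) * t + 1 / (-S' 0 / S 0)) := by
  -- basic membership facts
  have h0D : (0 : ℝ) ∈ D := by
    rw [hD]; exact ⟨le_refl 0, by exact_mod_cast hT⟩
  have hmemD : ∀ t : ℝ, t ∈ D ↔ 0 ≤ t ∧ (t : EReal) < T := by
    intro t; rw [hD]; rfl
  have hIccD : ∀ t ∈ D, Icc (0:ℝ) t ⊆ D := by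
    intro t ht x hx
    rw [hmemD] at ht ⊢
    exact ⟨hx.1, lt_of_le_of_lt (by exact_mod_cast hx.2) ht.2⟩
  have hDconv : Convex ℝ D := by
    rw [convex_iff_ordConnected]
    constructor
    intro x hx y hy z hz
    rw [hmemD] at hx hy ⊢
    exact ⟨hx.1.trans hz.1, lt_of_le_of_lt (by exact_mod_cast hz.2) hy.2⟩
  have hDIci : D ⊆ Ici (0:ℝ) := fun x hx => ((hmemD x).1 hx).1
  have hDnhd : ∀ t ∈ D, D ∈ nhdsWithin t (Ici 0) := by
    intro t ht
    rcases eq_or_ne T ⊤ with hTt | hTt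
    · apply Filter.mem_of_superset self_mem_nhdsWithin
      intro x hx
      rw [hmemD]
      exact ⟨hx, hTt ▸ EReal.coe_lt_top x⟩
    · have hTb : T ≠ ⊥ := (EReal.bot_lt_zero.trans hT).ne'
      lift T to ℝ using ⟨hTt, hTb⟩ with Tr
      have htT : t < Tr := by
        have := ((hmemD t).1 ht).2; exact_mod_cast this
      rw [mem_nhdsWithin]
      refine ⟨Iio Tr, isOpen_Iio, htT, ?_⟩
      intro x hx
      rw [hmemD]
      exact ⟨hx.2, by exact_mod_cast hx.1⟩
  have hDmeas : MeasurableSet D := by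
    rw [hD]
    have : {x : ℝ | 0 ≤ x ∧ (x : EReal) < T}
        = Ici 0 ∩ (fun x : ℝ => (x : EReal)) ⁻¹' Iio T := rfl
    rw [this]
    exact measurableSet_Ici.inter
      ((continuous_coe_real_ereal.measurable) measurableSet_Iio)
  have hSpos : ∀ t ∈ D, 0 < S t := fun t ht => (hSrange t ht).1
  have hS'ne : ∀ t ∈ D, S' t ≠ 0 := fun t ht => (hS'neg t ht).ne
  -- key algebraic relation
  set Gf : ℝ → ℝ := fun t => ∫ x in D ∩ Ioi t, S x ^ 2 with hGf
  have rel : ∀ t ∈ D, Gf t * S' t = 2 * k * S t ^ 3 := by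
    intro t ht
    have h1 := hconst t ht
    have h2 := (hSpos t ht).ne'
    field_simp at h1
    linarith
  -- decomposition of Gf
  have hdecomp : ∀ t ∈ D, Gf t = Gf 0 - ∫ x in (0:ℝ)..t, S x ^ 2 := by
    intro t ht
    have htn : (0:ℝ) ≤ t := ((hmemD t).1 ht).1
    have hunion : D ∩ Ioi (0:ℝ) = Ioc 0 t ∪ (D ∩ Ioi t) := by
      ext x
      constructor
      · rintro ⟨hxD, hx0⟩
        rcases le_or_gt x t with h | h
        · exact Or.inl ⟨hx0, h⟩
        · exact Or.inr ⟨hxD, h⟩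
      · rintro (⟨h1, h2⟩ | ⟨h1, h2⟩)
        · exact ⟨hIccD t ht ⟨le_of_lt h1, h2⟩, h1⟩
        · exact ⟨h1, lt_of_le_of_lt htn h2⟩
    have hdis : Disjoint (Ioc 0 t) (D ∩ Ioi t) := by
      rw [Set.disjoint_left]
      rintro x ⟨_, hxt⟩ ⟨_, hxt'⟩
      exact absurd hxt' (not_lt.2 hxt)
    have hi1 : IntegrableOn (fun x => S x ^ 2) (Ioc 0 t) :=
      hint.mono_set (fun x hx => hIccD t ht ⟨le_of_lt hx.1, hx.2⟩)
    have hi2 : IntegrableOn (fun x => S x ^ 2) (D ∩ Ioi t) :=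
      hint.mono_set inter_subset_left
    have key : (∫ x in D ∩ Ioi (0:ℝ), S x ^ 2)
        = (∫ x in Ioc (0:ℝ) t, S x ^ 2) + ∫ x in D ∩ Ioi t, S x ^ 2 := by
      rw [hunion]
      exact setIntegral_union hdis (hDmeas.inter measurableSet_Ioi) hi1 hi2
    have : (∫ x in (0:ℝ)..t, S x ^ 2) = ∫ x in Ioc (0:ℝ) t, S x ^ 2 :=
      intervalIntegral.integral_of_le htn
    simp only [hGf] at *
    rw [this]
    linarith [key]
  -- FTC
  have hSm : AEStronglyMeasurable (fun x => S x ^ 2) (volume.restrict D) :=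
    hint.aestronglyMeasurable
  have hFderiv : ∀ t ∈ D,
      HasDerivWithinAt (fun u => ∫ x in (0:ℝ)..u, S x ^ 2) (S t ^ 2) D t := by
    intro t ht
    have hii : IntervalIntegrable (fun x => S x ^ 2) volume 0 t := by
      rw [intervalIntegrable_iff_integrableOn_Ioc_of_le ((hmemD t).1 ht).1]
      exact hint.mono_set (fun x hx => hIccD t ht ⟨le_of_lt hx.1, hx.2⟩)
    have hca : ContinuousAt (fun x => S x ^ 2) t :=
      ((hderiv t ht).continuousAt.pow 2)
    rcases eq_or_lt_of_le ((hmemD t).1 ht).1 with h0 | h0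
    · subst h0
      have hmeas : StronglyMeasurableAtFilter (fun x => S x ^ 2)
          (nhdsWithin 0 (Ioi (0:ℝ))) volume :=
        ⟨D, (nhdsWithin_mono 0 Ioi_subset_Ici_self) (hDnhd 0 h0D), hSm⟩
      exact (intervalIntegral.integral_hasDerivWithinAt_right
        (s := Ici (0:ℝ)) (t := Ioi (0:ℝ)) hii hmeas hca.continuousWithinAt).mono hDIci
    · have hDn : D ∈ nhds t := by
        have h1 := hDnhd t ht
        rwa [nhdsWithin_eq_nhds.2 (Ici_mem_nhds h0)] at h1
      exact (intervalIntegral.integral_hasDerivAt_right hii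
        ⟨D, hDn, hSm⟩ hca).hasDerivWithinAt
  have hGderiv : ∀ t ∈ D, HasDerivWithinAt Gf (-(S t ^ 2)) D t := by
    intro t ht
    have h1 : HasDerivWithinAt (fun u => Gf 0 - ∫ x in (0:ℝ)..u, S x ^ 2)
        (-(S t ^ 2)) D t := (hFderiv t ht).const_sub (Gf 0)
    exact h1.congr (fun x hx => hdecomp x hx) (hdecomp t ht)
  -- ψ and its derivative
  set c1 : ℝ := (1 + 4 * k) / (2 * k) with hc1
  set ψ : ℝ → ℝ := fun u => -(Gf u) / (2 * k * S u ^ 2) with hψdef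
  have hψ : ∀ t ∈ D, HasDerivWithinAt ψ c1 D t := by
    intro t ht
    have hden : 2 * k * S t ^ 2 ≠ 0 :=
      mul_ne_zero (mul_ne_zero two_ne_zero hk) (pow_ne_zero 2 (hSpos t ht).ne')
    have hnum : HasDerivWithinAt (fun u => -(Gf u)) (S t ^ 2) D t := by
      have := (hGderiv t ht).neg; rw [neg_neg] at this; exact this
    have hd : HasDerivWithinAt (fun u => 2 * k * S u ^ 2)
        (2 * k * (2 * S t * S' t)) D t := by
      have h2 := (((hderiv t ht).hasDerivWithinAt (s := D)).pow 2).const_mul (2 * k)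
      simpa [pow_one, mul_assoc, mul_comm, mul_left_comm] using h2
    have h3 := hnum.div hd hden
    have hS := (hSpos t ht).ne'
    have hS' := hS'ne t ht
    have hGval : Gf t = 2 * k * S t ^ 3 / S' t := by
      field_simp
      linarith [rel t ht]
    refine h3.congr_deriv ?_
    rw [hGval, hc1]
    field_simp
    ring
  -- constancy of ψ - c1 * t
  have hconstψ : ∀ t ∈ D, ψ t = c1 * t + ψ 0 := by
    intro t ht
    set φ : ℝ → ℝ := fun u => ψ u - c1 * u with hφdef
    have hφ : ∀ x ∈ D, HasFDerivWithinAt φ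
        ((fun _ => (0 : ℝ →L[ℝ] ℝ)) x) D x := by
      intro x hx
      have h1 := (hψ x hx).sub ((hasDerivWithinAt_id x D).const_mul c1)
      have h0 : HasDerivWithinAt φ 0 D x := by
        exact h1.congr_deriv (by ring)
      have h2 := h0.hasFDerivWithinAt
      have h3 : ContinuousLinearMap.toSpanSingleton ℝ (0:ℝ) = 0 := by
        ext; simp
      rwa [h3] at h2
    have hb := hDconv.norm_image_sub_le_of_norm_hasFDerivWithin_le (C := 0) hφ
      (fun x _ => by simp) h0D ht
    have hφeq : φ t = φ 0 := by
      have h2 : ‖φ t - φ 0‖ ≤ 0 := by simpa using hb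
      have h3 : φ t - φ 0 = 0 := by
        simpa using le_antisymm h2 (norm_nonneg _)
      linarith [h3]
    have : ψ t - c1 * t = ψ 0 - c1 * 0 := hφeq
    linarith [this]
  -- ψ equals the reciprocal hazard
  have hψval : ∀ t ∈ D, ψ t = -S t / S' t := by
    intro t ht
    have hS := (hSpos t ht).ne'
    have hS' := hS'ne t ht
    have hGval : Gf t = 2 * k * S t ^ 3 / S' t := by
      field_simp
      linarith [rel t ht]
    show -(Gf t) / (2 * k * S t ^ 2) = -S t / S' t
    rw [hGval]
    field_simp
  -- conclusion
  intro t ht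
  have h1 : ψ t = c1 * t + ψ 0 := hconstψ t ht
  have hψ0 : ψ 0 = 1 / (-S' 0 / S 0) := by
    rw [hψval 0 h0D, hS0]
    rw [div_one]
    simp [div_neg, neg_div]
  rw [← hψ0, ← h1, hψval t ht]
  have hS := (hSpos t ht).ne'
  have hS' := hS'ne t ht
  rw [one_div_div]
  field_simp
end

section
/- Let θ>0 and β>0, and let X₁, X₂, X₃ be i.i.d. positive random variables with common continuous cumulative distribution function F. Then the Cramér–von Mises type measure Δ_P = ∫₀^∞ (E[((β+1)/(θ+βX₁))·min(X₁,t)] − F(t))² dF(t) satisfies Δ_P = (β+1)²·E[min(X₁,X₃)·min(X₂,X₃)/((θ+βX₁)(θ+βX₂))] − (β+1)·E[min(X₁,max(X₂,X₃))/(θ+βX₁)] + 1/3. -/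
open MeasureTheory Set
open Filter Topology Function


lemma CvM.singleton_null (μ : Measure ℝ) [IsProbabilityMeasure μ]
    (hcont : Continuous fun t => (μ (Iic t)).toReal) (a : ℝ) : μ {a} = 0 := by
  set F : ℝ → ℝ := fun t => (μ (Iic t)).toReal with hF
  have key : ∀ n : ℕ, (μ {a}).toReal ≤ F a - F (a - 1/(n+1)) := by
    intro n
    have hlt : a - 1/(n+1) < a := by
      have : (0:ℝ) < 1/(n+1) := by positivity
      linarith
    have hsub : {a} ⊆ Ioc (a - 1/(n+1)) a := fun x hx => by
      simp only [mem_singleton_iff] at hx; subst hx; exact ⟨hlt, le_refl _⟩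
    have h1 : μ (Iic a) = μ (Iic (a - 1/(n+1))) + μ (Ioc (a - 1/(n+1)) a) := by
      rw [← measure_union (Iic_disjoint_Ioc le_rfl) measurableSet_Ioc,
        Iic_union_Ioc_eq_Iic hlt.le]
    have h2 : (μ (Ioc (a - 1/(n+1)) a)).toReal = F a - F (a - 1/(n+1)) := by
      rw [hF]; simp only
      rw [h1, ENNReal.toReal_add (measure_ne_top _ _) (measure_ne_top _ _)]
      ring
    rw [← h2]
    exact ENNReal.toReal_mono (measure_ne_top _ _) (measure_mono hsub)
  have hT : Tendsto (fun n : ℕ => F a - F (a - 1/(n+1))) atTop (𝓝 0) := by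
    have h1 : Tendsto (fun n : ℕ => a - 1/(n+1)) atTop (𝓝 a) := by
      have := tendsto_one_div_add_atTop_nhds_zero_nat (𝕜 := ℝ)
      have h2 := tendsto_const_nhds.sub (f := fun _ : ℕ => a) this
      simpa using h2
    have h3 : Tendsto (fun n : ℕ => F (a - 1/(n+1))) atTop (𝓝 (F a)) :=
      (hcont.tendsto a).comp h1
    have h4 := (tendsto_const_nhds (x := F a) (f := (atTop : Filter ℕ))).sub h3
    simpa using h4
  have hle : (μ {a}).toReal ≤ 0 := ge_of_tendsto' hT key
  have h0 : (μ {a}).toReal = 0 := le_antisymm hle ENNReal.toReal_nonneg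
  rcases (ENNReal.toReal_eq_zero_iff _).mp h0 with h | h
  · exact h
  · exact absurd h (measure_ne_top _ _)

lemma CvM.integral_F_sq (μ : Measure ℝ) [IsProbabilityMeasure μ]
    (hpos : μ (Iic 0) = 0)
    (hcont : Continuous fun t => (μ (Iic t)).toReal) :
    ∫ t, ((μ (Iic t)).toReal) ^ 2 ∂μ = 1/3 := by
  set F : ℝ → ℝ := fun t => (μ (Iic t)).toReal with hF
  have Fmeas : Measurable F := hcont.measurable
  have hF0 : F 0 = 0 := by simp [hF, hpos]
  have Fnonneg : ∀ t, 0 ≤ F t := fun t => ENNReal.toReal_nonneg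
  have Fle1 : ∀ t, F t ≤ 1 := fun t => by
    have h := ENNReal.toReal_mono (measure_ne_top μ univ) (measure_mono (subset_univ (Iic t)))
    simpa [measure_univ] using h
  have Fmono : Monotone F := fun s t h =>
    ENNReal.toReal_mono (measure_ne_top _ _) (measure_mono (Iic_subset_Iic.2 h))
  have htop : Tendsto F atTop (𝓝 1) := by
    have h1 := tendsto_measure_Iic_atTop μ
    have h2 := (ENNReal.tendsto_toReal (measure_ne_top μ univ)).comp h1
    rw [measure_univ, ENNReal.toReal_one] at h2; exact h2
  have key : ∀ c : ℝ, 0 ≤ c → c < 1 → μ {x | F x ≤ c} = ENNReal.ofReal c := by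
    intro c hc0 hc1
    set S : Set ℝ := {x | F x ≤ c} with hS
    have hne : (0:ℝ) ∈ S := by simp [hS, hF0, hc0]
    have hclosed : IsClosed S := isClosed_le hcont continuous_const
    have hbdd : BddAbove S := by
      obtain ⟨T, hT⟩ := (htop.eventually (eventually_gt_nhds hc1)).exists_forall_of_atTop
      exact ⟨T, fun x hx => le_of_not_gt fun h => absurd (hT x h.le) (not_lt.2 hx)⟩
    set t₀ := sSup S with ht₀
    have hmem : t₀ ∈ S := hclosed.csSup_mem ⟨0, hne⟩ hbdd
    have hge : c ≤ F t₀ := by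
      have hseq : Tendsto (fun n : ℕ => F (t₀ + 1/(n+1))) atTop (𝓝 (F t₀)) := by
        refine (hcont.tendsto t₀).comp ?_
        have h2 := tendsto_const_nhds (x := t₀) (f := (atTop : Filter ℕ))
          |>.add tendsto_one_div_add_atTop_nhds_zero_nat
        simpa using h2
      refine ge_of_tendsto' hseq fun n => ?_
      have hnotin : t₀ + 1/(n+1) ∉ S := fun h => by
        have := le_csSup hbdd h
        have hp : (0:ℝ) < 1/(n+1) := by positivity
        linarith
      exact le_of_not_ge hnotin
    have hSt : S = Iic t₀ := by
      ext x
      exact ⟨fun h => le_csSup hbdd h, fun h => le_trans (Fmono h) hmem⟩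
    have hFt : F t₀ = c := le_antisymm hmem hge
    calc μ S = μ (Iic t₀) := by rw [hSt]
      _ = ENNReal.ofReal (F t₀) := (ENNReal.ofReal_toReal (measure_ne_top μ _)).symm
      _ = ENNReal.ofReal c := by rw [hFt]
  haveI : IsProbabilityMeasure (μ.map F) := Measure.isProbabilityMeasure_map Fmeas.aemeasurable
  have hmap : μ.map F = volume.restrict (Ioc 0 1) := by
    refine Measure.ext_of_Iic _ _ fun c => ?_
    rw [Measure.map_apply Fmeas measurableSet_Iic, Measure.restrict_apply measurableSet_Iic]
    have hpre : F ⁻¹' Iic c = {x | F x ≤ c} := rfl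
    rcases lt_or_ge c 0 with hc | hc
    · have h1 : F ⁻¹' Iic c = ∅ := by
        ext x; simp only [hpre, mem_setOf_eq, mem_empty_iff_false, iff_false, not_le,
          mem_preimage, mem_Iic]
        exact lt_of_lt_of_le hc (Fnonneg x)
      have h2 : Iic c ∩ Ioc 0 1 = ∅ := by
        ext x; simp only [mem_inter_iff, mem_Iic, mem_Ioc, mem_empty_iff_false, iff_false]
        rintro ⟨h3, h4, -⟩; linarith
      rw [h1, h2]; simp
    · rcases lt_or_ge c 1 with hc1 | hc1
      · have h2 : Iic c ∩ Ioc 0 1 = Ioc 0 c := by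
          ext x; simp only [mem_inter_iff, mem_Iic, mem_Ioc]
          constructor
          · rintro ⟨h3, h4, -⟩; exact ⟨h4, h3⟩
          · rintro ⟨h3, h4⟩; exact ⟨h4, h3, le_trans h4 hc1.le⟩
        rw [hpre, key c hc hc1, h2, Real.volume_Ioc]
        norm_num
      · have h1 : F ⁻¹' Iic c = univ := by
          ext x; simp only [mem_preimage, mem_Iic, mem_univ, iff_true]
          exact le_trans (Fle1 x) hc1
        have h2 : Iic c ∩ Ioc 0 1 = Ioc 0 1 := by
          ext x; simp only [mem_inter_iff, mem_Iic, mem_Ioc]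
          exact ⟨fun h => h.2, fun h => ⟨le_trans h.2 hc1, h⟩⟩
        rw [h1, h2, Real.volume_Ioc, measure_univ]
        norm_num
  have hint : ∫ t, (F t) ^ 2 ∂μ = ∫ u, u ^ 2 ∂(μ.map F) :=
    (integral_map Fmeas.aemeasurable ((continuous_pow 2).aestronglyMeasurable)).symm
  rw [hint, hmap]
  have : ∫ u in Ioc (0:ℝ) 1, u ^ 2 = ∫ u in (0:ℝ)..1, u ^ 2 :=
    (intervalIntegral.integral_of_le zero_le_one).symm
  rw [this, integral_pow]
  norm_num

lemma CvM.ae_pos (μ : Measure ℝ) (hpos : μ (Iic 0) = 0) : ∀ᵐ x ∂μ, 0 < x := by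
  rw [ae_iff]
  have : {x : ℝ | ¬ 0 < x} = Iic 0 := by ext x; simp
  rw [this]; exact hpos

lemma CvM.ae_pos_prod {α : Type*} [MeasurableSpace α] (μ : Measure ℝ) (ν : Measure α)
    [SFinite μ] [SFinite ν] (hpos : μ (Iic 0) = 0) {P : α → Prop} (hP : ∀ᵐ y ∂ν, P y) :
    ∀ᵐ p ∂(μ.prod ν), 0 < p.1 ∧ P p.2 := by
  rw [ae_iff]
  have hsub : {p : ℝ × α | ¬(0 < p.1 ∧ P p.2)} ⊆
      (Iic 0 ×ˢ univ : Set (ℝ × α)) ∪ (univ ×ˢ {y | ¬ P y}) := by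
    intro p hp
    simp only [mem_setOf_eq, not_and_or, not_lt] at hp
    rcases hp with h | h
    · exact Or.inl (by simp [h])
    · exact Or.inr (by simpa using h)
  refine measure_mono_null hsub (measure_union_null ?_ ?_)
  · rw [Measure.prod_prod, hpos, zero_mul]
  · rw [Measure.prod_prod]
    rw [ae_iff] at hP
    rw [hP, mul_zero]

lemma CvM.diag_null (μ : Measure ℝ) [IsProbabilityMeasure μ]
    (hatom : ∀ a : ℝ, μ {a} = 0) :
    μ.prod μ {p : ℝ × ℝ | p.1 = p.2} = 0 := by
  have hm : MeasurableSet {p : ℝ × ℝ | p.1 = p.2} :=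
    (isClosed_eq continuous_fst continuous_snd).measurableSet
  rw [Measure.prod_apply hm]
  have : ∀ x : ℝ, (Prod.mk x ⁻¹' {p : ℝ × ℝ | p.1 = p.2}) = {x} := by
    intro x; ext y; simp [eq_comm]
  simp only [this, hatom]
  simp

lemma CvM.hb {θ β : ℝ} (hθ : 0 < θ) (hβ : 0 < β) {x t : ℝ} (hx : 0 < x) (ht : 0 < t) :
    ‖min x t / (θ + β * x)‖ ≤ 1 / β := by
  have hd : 0 < θ + β * x := by have := mul_pos hβ hx; linarith
  rw [Real.norm_eq_abs, abs_of_nonneg (div_nonneg (le_of_lt (lt_min hx ht)) hd.le),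
    div_le_div_iff₀ hd hβ]
  nlinarith [min_le_left x t, mul_pos hβ hx]

lemma CvM.A_eq (θ β : ℝ) (hθ : 0 < θ) (hβ : 0 < β)
    (μ : Measure ℝ) [IsProbabilityMeasure μ] (hpos : μ (Iic 0) = 0) :
    ∫ t, (∫ x, ((β + 1) / (θ + β * x)) * min x t ∂μ) ^ 2 ∂μ =
      (β + 1) ^ 2 *
        ∫ x, ∫ y, ∫ z, min x z * min y z / ((θ + β * x) * (θ + β * y)) ∂μ ∂μ ∂μ := by
  have haex : ∀ᵐ x ∂μ, 0 < x := CvM.ae_pos μ hpos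
  have hae3 : ∀ᵐ q ∂(μ.prod (μ.prod μ)), 0 < q.1 ∧ (0 < q.2.1 ∧ 0 < q.2.2) :=
    CvM.ae_pos_prod μ (μ.prod μ) hpos (CvM.ae_pos_prod μ μ hpos haex)
  set h : ℝ → ℝ → ℝ := fun x t => min x t / (θ + β * x) with hh
  have hmeasU : Measurable (uncurry fun (t : ℝ) (p : ℝ × ℝ) => h p.1 t * h p.2 t) := by
    simp only [hh, uncurry]
    fun_prop
  have IntU : Integrable (uncurry fun (t : ℝ) (p : ℝ × ℝ) => h p.1 t * h p.2 t)
      (μ.prod (μ.prod μ)) := by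
    refine Integrable.mono' (integrable_const ((1/β) * (1/β)))
      hmeasU.aestronglyMeasurable (hae3.mono fun q hq => ?_)
    simp only [uncurry]
    rw [norm_mul]
    exact mul_le_mul (CvM.hb hθ hβ hq.2.1 hq.1) (CvM.hb hθ hβ hq.2.2 hq.1)
      (norm_nonneg _) (by positivity)
  have hA1 : ∀ t : ℝ, (∫ x, ((β + 1) / (θ + β * x)) * min x t ∂μ)
      = (β + 1) * ∫ x, h x t ∂μ := by
    intro t
    rw [← integral_const_mul]
    refine integral_congr_ae (ae_of_all _ fun x => ?_)
    rw [hh]; ring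
  have hA2 : ∀ t : ℝ, (∫ x, h x t ∂μ) ^ 2
      = ∫ p, h p.1 t * h p.2 t ∂(μ.prod μ) := by
    intro t
    rw [sq]
    exact (integral_prod_mul (fun x => h x t) (fun y => h y t)).symm
  calc ∫ t, (∫ x, ((β + 1) / (θ + β * x)) * min x t ∂μ) ^ 2 ∂μ
      = ∫ t, (β + 1) ^ 2 * ∫ p, h p.1 t * h p.2 t ∂(μ.prod μ) ∂μ := by
        simp_rw [hA1, mul_pow, hA2]
    _ = (β + 1) ^ 2 * ∫ t, ∫ p, h p.1 t * h p.2 t ∂(μ.prod μ) ∂μ := integral_const_mul _ _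
    _ = (β + 1) ^ 2 * ∫ p, ∫ t, h p.1 t * h p.2 t ∂μ ∂(μ.prod μ) := by
        rw [integral_integral_swap IntU]
    _ = (β + 1) ^ 2 * ∫ x, ∫ y, ∫ z, h x z * h y z ∂μ ∂μ ∂μ := by
        have hint : Integrable (fun p : ℝ × ℝ => ∫ t, h p.1 t * h p.2 t ∂μ) (μ.prod μ) :=
          IntU.swap.integral_prod_left
        rw [integral_prod _ hint]
    _ = (β + 1) ^ 2 *
        ∫ x, ∫ y, ∫ z, min x z * min y z / ((θ + β * x) * (θ + β * y)) ∂μ ∂μ ∂μ := by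
        simp only [hh, div_mul_div_comm]
lemma CvM.D_eq (μ : Measure ℝ) [IsProbabilityMeasure μ] (hpos : μ (Iic 0) = 0)
    (hatom : ∀ a : ℝ, μ {a} = 0) (x : ℝ) :
    ∫ y, ∫ z, min x (max y z) ∂μ ∂μ = 2 * ∫ y, min x y * (μ (Iic y)).toReal ∂μ := by
  have hae2 : ∀ᵐ p ∂(μ.prod μ), 0 < p.1 ∧ 0 < p.2 :=
    CvM.ae_pos_prod μ μ hpos (CvM.ae_pos μ hpos)
  set r : ℝ × ℝ → ℝ := fun p => if p.2 < p.1 then min x p.1 else 0 with hr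
  have habs : ∀ w : ℝ, 0 < w → ‖min x w‖ ≤ |x| := by
    intro w hw
    rw [Real.norm_eq_abs, abs_le]
    constructor
    · exact le_min (neg_abs_le x) (le_trans (neg_nonpos.2 (abs_nonneg x)) hw.le)
    · exact le_trans (min_le_left x w) (le_abs_self x)
  have hrm : Measurable r := by
    refine Measurable.ite (measurableSet_lt measurable_snd measurable_fst) ?_ measurable_const
    fun_prop
  have Int_r : Integrable r (μ.prod μ) := by
    refine Integrable.mono' (integrable_const |x|) hrm.aestronglyMeasurable
      (hae2.mono fun p hp => ?_)
    rw [hr]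
    dsimp only
    split_ifs
    · exact habs p.1 hp.1
    · simpa using abs_nonneg x
  have hfm : Measurable (fun p : ℝ × ℝ => min x (max p.1 p.2)) := by fun_prop
  have Int_f : Integrable (fun p : ℝ × ℝ => min x (max p.1 p.2)) (μ.prod μ) := by
    refine Integrable.mono' (integrable_const |x|) hfm.aestronglyMeasurable
      (hae2.mono fun p hp => ?_)
    exact habs _ (lt_max_of_lt_left hp.1)
  have hne : ∀ᵐ p ∂(μ.prod μ), p.1 ≠ p.2 := by
    rw [ae_iff]
    have : {p : ℝ × ℝ | ¬ p.1 ≠ p.2} = {p : ℝ × ℝ | p.1 = p.2} := by ext p; simp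
    rw [this]
    exact CvM.diag_null μ hatom
  have heq : ∀ᵐ p ∂(μ.prod μ), min x (max p.1 p.2) = r p + r p.swap := by
    refine hne.mono fun p hp => ?_
    rcases lt_or_gt_of_ne hp with h | h
    · rw [hr]; simp only [Prod.fst_swap, Prod.snd_swap]
      rw [if_neg (asymm h), if_pos h, max_eq_right h.le, zero_add]
    · rw [hr]; simp only [Prod.fst_swap, Prod.snd_swap]
      rw [if_pos h, if_neg (asymm h), max_eq_left h.le, add_zero]
  have hswap : ∫ p, r p.swap ∂(μ.prod μ) = ∫ p, r p ∂(μ.prod μ) := integral_prod_swap r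
  have hsum : ∫ p, min x (max p.1 p.2) ∂(μ.prod μ) = 2 * ∫ p, r p ∂(μ.prod μ) := by
    have Int_rs : Integrable (fun p : ℝ × ℝ => r p.swap) (μ.prod μ) := Int_r.swap
    rw [integral_congr_ae heq, integral_add Int_r Int_rs, hswap]
    ring
  have hinner : ∀ y : ℝ, ∫ z, r (y, z) ∂μ = min x y * (μ (Iic y)).toReal := by
    intro y
    have hind : ∀ z : ℝ, r (y, z) = (Iio y).indicator (fun _ => min x y) z := by
      intro z
      rw [hr]
      by_cases hz : z < y
      · simp [indicator, hz]
      · simp [indicator, hz]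
    calc ∫ z, r (y, z) ∂μ = ∫ z, (Iio y).indicator (fun _ => min x y) z ∂μ := by
          simp_rw [hind]
      _ = (μ (Iio y)).toReal • min x y := integral_indicator_const _ measurableSet_Iio
      _ = min x y * (μ (Iic y)).toReal := by
          rw [measure_congr (Iio_ae_eq_Iic' (hatom y)), smul_eq_mul, mul_comm]
  calc ∫ y, ∫ z, min x (max y z) ∂μ ∂μ
      = ∫ p, min x (max p.1 p.2) ∂(μ.prod μ) := (integral_prod _ Int_f).symm
    _ = 2 * ∫ p, r p ∂(μ.prod μ) := hsum
    _ = 2 * ∫ y, ∫ z, r (y, z) ∂μ ∂μ := by rw [integral_prod _ Int_r]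
    _ = 2 * ∫ y, min x y * (μ (Iic y)).toReal ∂μ := by simp_rw [hinner]
lemma CvM.B_eq (θ β : ℝ) (hθ : 0 < θ) (hβ : 0 < β)
    (μ : Measure ℝ) [IsProbabilityMeasure μ] (hpos : μ (Iic 0) = 0)
    (hcont : Continuous fun t => (μ (Iic t)).toReal) :
    (β + 1) * ∫ x, ∫ y, ∫ z, min x (max y z) / (θ + β * x) ∂μ ∂μ ∂μ =
      2 * ∫ t, (∫ x, ((β + 1) / (θ + β * x)) * min x t ∂μ) * (μ (Iic t)).toReal ∂μ := by
  have hatom : ∀ a : ℝ, μ {a} = 0 := CvM.singleton_null μ hcont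
  have haex : ∀ᵐ x ∂μ, 0 < x := CvM.ae_pos μ hpos
  have hae2 : ∀ᵐ p ∂(μ.prod μ), 0 < p.1 ∧ 0 < p.2 := CvM.ae_pos_prod μ μ hpos haex
  set F : ℝ → ℝ := fun t => (μ (Iic t)).toReal with hF
  have Fmeas : Measurable F := hcont.measurable
  have Fabs : ∀ t, ‖F t‖ ≤ 1 := by
    intro t
    rw [hF, Real.norm_eq_abs, abs_of_nonneg ENNReal.toReal_nonneg]
    have h := ENNReal.toReal_mono (measure_ne_top μ univ) (measure_mono (subset_univ (Iic t)))
    simpa [measure_univ] using h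
  set h : ℝ → ℝ → ℝ := fun x t => min x t / (θ + β * x) with hh
  set M : ℝ → ℝ := fun x => ∫ t, min x t * F t ∂μ with hM
  -- left side
  have hL : (β + 1) * ∫ x, ∫ y, ∫ z, min x (max y z) / (θ + β * x) ∂μ ∂μ ∂μ
      = (β + 1) * (2 * ∫ x, M x / (θ + β * x) ∂μ) := by
    congr 1
    have h1 : ∀ x : ℝ, ∫ y, ∫ z, min x (max y z) / (θ + β * x) ∂μ ∂μ
        = (2 * M x) / (θ + β * x) := by
      intro x
      simp_rw [integral_div]
      rw [CvM.D_eq μ hpos hatom x]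
    simp_rw [h1, mul_div_assoc]
    exact integral_const_mul _ _
  rw [hL]
  -- right side
  have hmeasq : Measurable (uncurry fun (t x : ℝ) => h x t * F t) := by
    have h1 : Measurable fun q : ℝ × ℝ => min q.2 q.1 / (θ + β * q.2) := by fun_prop
    exact h1.mul (Fmeas.comp measurable_fst)
  have IntGFq : Integrable (uncurry fun (t x : ℝ) => h x t * F t) (μ.prod μ) := by
    refine Integrable.mono' (integrable_const ((1/β) * 1)) hmeasq.aestronglyMeasurable
      (hae2.mono fun q hq => ?_)
    simp only [uncurry]
    rw [norm_mul]
    exact mul_le_mul (CvM.hb hθ hβ hq.2 hq.1) (Fabs q.1) (norm_nonneg _) (by positivity)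
  have hG : ∀ t : ℝ, (∫ x, ((β + 1) / (θ + β * x)) * min x t ∂μ)
      = (β + 1) * ∫ x, h x t ∂μ := by
    intro t
    rw [← integral_const_mul]
    refine integral_congr_ae (ae_of_all _ fun x => ?_)
    rw [hh]; ring
  have hR : ∫ t, (∫ x, ((β + 1) / (θ + β * x)) * min x t ∂μ) * (μ (Iic t)).toReal ∂μ
      = (β + 1) * ∫ x, M x / (θ + β * x) ∂μ := by
    show ∫ t, (∫ x, ((β + 1) / (θ + β * x)) * min x t ∂μ) * F t ∂μ
      = (β + 1) * ∫ x, M x / (θ + β * x) ∂μ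
    calc ∫ t, (∫ x, ((β + 1) / (θ + β * x)) * min x t ∂μ) * F t ∂μ
        = ∫ t, (β + 1) * ∫ x, h x t * F t ∂μ ∂μ := by
          refine integral_congr_ae (ae_of_all _ fun t => ?_)
          simp only
          rw [hG t, mul_assoc, ← integral_mul_const]
      _ = (β + 1) * ∫ t, ∫ x, h x t * F t ∂μ ∂μ := integral_const_mul _ _
      _ = (β + 1) * ∫ x, ∫ t, h x t * F t ∂μ ∂μ := by
          rw [integral_integral_swap IntGFq]
      _ = (β + 1) * ∫ x, M x / (θ + β * x) ∂μ := by
          congr 1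
          refine integral_congr_ae (ae_of_all _ fun x => ?_)
          have h2 : ∀ t : ℝ, h x t * F t = (min x t * F t) / (θ + β * x) := by
            intro t; rw [hh]; simp only; rw [div_mul_eq_mul_div]
          simp_rw [h2, integral_div]
          rfl
  rw [hR]
  ring

/-- **Decomposition of the Cramér–von Mises type measure `Δ_P`.**
Let `θ > 0`, `β > 0`, and let `X₁, X₂, X₃` be i.i.d. positive random variables with
common continuous CDF `F` (here represented by their common law `μ` on `ℝ`, supported
on `(0,∞)`, with `F t = μ(Iic t)`). Then
`Δ_P = ∫₀^∞ (E[((β+1)/(θ+βX₁))·min(X₁,t)] - F(t))² dF(t)` equals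
`(β+1)²·E[min(X₁,X₃)min(X₂,X₃)/((θ+βX₁)(θ+βX₂))]
  - (β+1)·E[min(X₁,max(X₂,X₃))/(θ+βX₁)] + 1/3`. -/
theorem deltaP_decomposition (θ β : ℝ) (hθ : 0 < θ) (hβ : 0 < β)
    (μ : Measure ℝ) [IsProbabilityMeasure μ]
    (hpos : μ (Iic 0) = 0)
    (hcont : Continuous fun t => (μ (Iic t)).toReal) :
    ∫ t, ((∫ x, ((β + 1) / (θ + β * x)) * min x t ∂μ) - (μ (Iic t)).toReal) ^ 2 ∂μ =
      (β + 1) ^ 2 *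
          (∫ x, ∫ y, ∫ z, min x z * min y z / ((θ + β * x) * (θ + β * y)) ∂μ ∂μ ∂μ) -
        (β + 1) * (∫ x, ∫ y, ∫ z, min x (max y z) / (θ + β * x) ∂μ ∂μ ∂μ) + 1 / 3 := by
  have haex : ∀ᵐ x ∂μ, 0 < x := CvM.ae_pos μ hpos
  have Fmeas : Measurable (fun t : ℝ => (μ (Iic t)).toReal) := hcont.measurable
  have Fabs : ∀ t : ℝ, ‖(μ (Iic t)).toReal‖ ≤ 1 := by
    intro t
    rw [Real.norm_eq_abs, abs_of_nonneg ENNReal.toReal_nonneg]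
    have h := ENNReal.toReal_mono (measure_ne_top μ univ) (measure_mono (subset_univ (Iic t)))
    simpa [measure_univ] using h
  have Gsm : AEStronglyMeasurable (fun t => ∫ x, ((β + 1) / (θ + β * x)) * min x t ∂μ) μ := by
    have hk : Measurable (fun q : ℝ × ℝ => ((β + 1) / (θ + β * q.2)) * min q.2 q.1) := by
      fun_prop
    exact hk.stronglyMeasurable.integral_prod_right'.aestronglyMeasurable
  have hG : ∀ t : ℝ, (∫ x, ((β + 1) / (θ + β * x)) * min x t ∂μ)
      = (β + 1) * ∫ x, min x t / (θ + β * x) ∂μ := by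
    intro t
    rw [← integral_const_mul]
    refine integral_congr_ae (ae_of_all _ fun x => ?_)
    ring
  have Gbdd : ∀ᵐ t ∂μ, ‖∫ x, ((β + 1) / (θ + β * x)) * min x t ∂μ‖ ≤ (β + 1) * (1 / β) := by
    refine haex.mono fun t ht => ?_
    rw [hG t, norm_mul, Real.norm_eq_abs (β + 1), abs_of_pos (by linarith)]
    refine mul_le_mul_of_nonneg_left ?_ (by linarith)
    have h1 := norm_integral_le_of_norm_le (integrable_const (1 / β))
      (haex.mono fun x hx => CvM.hb hθ hβ hx ht)
    simpa [measure_univ] using h1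
  have IntG2 : Integrable (fun t => (∫ x, ((β + 1) / (θ + β * x)) * min x t ∂μ)
      * (∫ x, ((β + 1) / (θ + β * x)) * min x t ∂μ)) μ := by
    refine Integrable.mono' (integrable_const (((β + 1) * (1 / β)) * ((β + 1) * (1 / β))))
      (Gsm.mul Gsm) (Gbdd.mono fun t ht => ?_)
    rw [norm_mul]
    exact mul_le_mul ht ht (norm_nonneg _) (by positivity)
  have IntGF : Integrable (fun t => (∫ x, ((β + 1) / (θ + β * x)) * min x t ∂μ)
      * (μ (Iic t)).toReal) μ := by
    refine Integrable.mono' (integrable_const ((β + 1) * (1 / β) * 1))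
      (Gsm.mul Fmeas.aestronglyMeasurable) (Gbdd.mono fun t ht => ?_)
    rw [norm_mul]
    exact mul_le_mul ht (Fabs t) (norm_nonneg _) (by positivity)
  have IntF2 : Integrable (fun t => (μ (Iic t)).toReal * (μ (Iic t)).toReal) μ := by
    refine Integrable.mono' (integrable_const ((1:ℝ) * 1))
      (Fmeas.aestronglyMeasurable.mul Fmeas.aestronglyMeasurable)
      (ae_of_all _ fun t => ?_)
    rw [norm_mul]
    exact mul_le_mul (Fabs t) (Fabs t) (norm_nonneg _) (by norm_num)
  have hexp : ∫ t, ((∫ x, ((β + 1) / (θ + β * x)) * min x t ∂μ) - (μ (Iic t)).toReal) ^ 2 ∂μ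
      = ∫ t, (∫ x, ((β + 1) / (θ + β * x)) * min x t ∂μ)
            * (∫ x, ((β + 1) / (θ + β * x)) * min x t ∂μ) ∂μ
        - 2 * ∫ t, (∫ x, ((β + 1) / (θ + β * x)) * min x t ∂μ) * (μ (Iic t)).toReal ∂μ
        + ∫ t, (μ (Iic t)).toReal * (μ (Iic t)).toReal ∂μ := by
    calc ∫ t, ((∫ x, ((β + 1) / (θ + β * x)) * min x t ∂μ) - (μ (Iic t)).toReal) ^ 2 ∂μ
        = ∫ t, ((∫ x, ((β + 1) / (θ + β * x)) * min x t ∂μ)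
              * (∫ x, ((β + 1) / (θ + β * x)) * min x t ∂μ)
            - 2 * ((∫ x, ((β + 1) / (θ + β * x)) * min x t ∂μ) * (μ (Iic t)).toReal)
            + (μ (Iic t)).toReal * (μ (Iic t)).toReal) ∂μ := by
          refine integral_congr_ae (ae_of_all _ fun t => ?_)
          simp only
          ring
      _ = _ := by
          have I2 : Integrable (fun t => 2 * ((∫ x, ((β + 1) / (θ + β * x)) * min x t ∂μ)
              * (μ (Iic t)).toReal)) μ := IntGF.const_mul 2
          have I12 : Integrable (fun t => (∫ x, ((β + 1) / (θ + β * x)) * min x t ∂μ)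
                * (∫ x, ((β + 1) / (θ + β * x)) * min x t ∂μ)
              - 2 * ((∫ x, ((β + 1) / (θ + β * x)) * min x t ∂μ) * (μ (Iic t)).toReal)) μ :=
            IntG2.sub I2
          rw [integral_add I12 IntF2, integral_sub IntG2 I2, integral_const_mul]
  have hAA : ∫ t, (∫ x, ((β + 1) / (θ + β * x)) * min x t ∂μ)
        * (∫ x, ((β + 1) / (θ + β * x)) * min x t ∂μ) ∂μ
      = (β + 1) ^ 2 *
        ∫ x, ∫ y, ∫ z, min x z * min y z / ((θ + β * x) * (θ + β * y)) ∂μ ∂μ ∂μ := by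
    rw [← CvM.A_eq θ β hθ hβ μ hpos]
    refine integral_congr_ae (ae_of_all _ fun t => ?_)
    simp only
    ring
  have hFF : ∫ t, (μ (Iic t)).toReal * (μ (Iic t)).toReal ∂μ = 1 / 3 := by
    rw [← CvM.integral_F_sq μ hpos hcont]
    refine integral_congr_ae (ae_of_all _ fun t => ?_)
    ring
  have hBB := CvM.B_eq θ β hθ hβ μ hpos hcont
  rw [hexp, hAA, hFF]
  linarith [hBB]
end
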